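/- arXiv:2503.10971 — 8 statements merged into one kernel-verified Lean document; each statement's English description precedes it below -/
import Mathlib

section
/- Let n be a positive integer and set ε := 1/(2n·√(1+k²)·K(k)) and ρ := √(2k²/(1+k²)). Then the function u(x) := ρ·y((2nx+1)·K(k)) satisfies ε²·u''(x) + u(x) − u(x)³ = 0 for all x ∈ [0,1], together with the Neumann boundary conditions u'(0) = u'(1) = 0, and u(0) = ρ. In particular, the problem ε²u'' + u − u³ = 0 on (0,1) with u'(0)=u'(1)=0 has an internal n-layer solution expressed through the Jacobi elliptic sine. -/
open Real Filter Set

/-- The complete elliptic integral of the first kind. -/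
noncomputable def Kint (k : ℝ) : ℝ :=
  ∫ s in (0:ℝ)..1, 1 / Real.sqrt ((1 - s ^ 2) * (1 - k ^ 2 * s ^ 2))

open Topology

section
variable {k : ℝ} {y : ℝ → ℝ}


lemma diffs (hy : ContDiff ℝ 2 y) : Differentiable ℝ y ∧ Differentiable ℝ (deriv y) := by
  have h2 : ContDiff ℝ ((1 : WithTop ℕ∞) + 1) y := by norm_num; exact hy
  rw [contDiff_succ_iff_deriv] at h2
  exact ⟨h2.1, h2.2.2.differentiable one_ne_zero⟩

lemma energy (hy : ContDiff ℝ 2 y)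
    (hode : ∀ x : ℝ, deriv (deriv y) x + (1 + k ^ 2) * y x - 2 * k ^ 2 * (y x) ^ 3 = 0)
    (hy0 : y 0 = 0) (hy0' : deriv y 0 = 1) :
    ∀ t, (deriv y t) ^ 2 = (1 - (y t) ^ 2) * (1 - k ^ 2 * (y t) ^ 2) := by
  obtain ⟨hd, hd'⟩ := diffs hy
  set E : ℝ → ℝ := fun t => (deriv y t) ^ 2 + (1 + k ^ 2) * (y t) ^ 2 - k ^ 2 * (y t) ^ 4 with hE
  have hDE : ∀ t, HasDerivAt E 0 t := by
    intro t
    have h1 : HasDerivAt y (deriv y t) t := (hd t).hasDerivAt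
    have h2 : HasDerivAt (deriv y) (deriv (deriv y) t) t := (hd' t).hasDerivAt
    have := (((h2.pow 2).add ((h1.pow 2).const_mul (1 + k ^ 2))).sub
      ((h1.pow 4).const_mul (k ^ 2)))
    convert this using 1
    · rfl
    · rfl
    · rfl
    have h := hode t
    simp only [Nat.cast_ofNat, pow_one]
    linear_combination (-2 * deriv y t) * h
  have hconst : ∀ t, E t = E 0 := by
    intro t
    exact is_const_of_deriv_eq_zero (fun s => (hDE s).differentiableAt)
      (fun s => (hDE s).deriv) t 0
  intro t
  have := hconst t
  rw [hE] at this
  simp only [hy0, hy0'] at this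
  nlinarith [this]

lemma ybound (hk : k ∈ Set.Ioo (0:ℝ) 1) (hy : ContDiff ℝ 2 y)
    (hen : ∀ t, (deriv y t) ^ 2 = (1 - (y t) ^ 2) * (1 - k ^ 2 * (y t) ^ 2))
    (hy0 : y 0 = 0) :
    ∀ t, (y t) ^ 2 ≤ 1 := by
  obtain ⟨hk0, hk1⟩ := hk
  by_contra h
  push_neg at h
  obtain ⟨t₀, ht₀⟩ := h
  set c : ℝ := (1 + k⁻¹ ^ 2) / 2 with hc
  have hc1 : 1 < c := by
    rw [hc]
    have : (1:ℝ) < k⁻¹ ^ 2 := by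
      rw [one_lt_sq_iff_one_lt_abs, abs_of_pos (by positivity)]
      exact (one_lt_inv₀ hk0).mpr hk1
    linarith
  have hck : k ^ 2 * c < 1 := by
    rw [hc]
    have h1 : k ^ 2 * k⁻¹ ^ 2 = 1 := by field_simp
    nlinarith [sq_nonneg k, hk1, hk0]
  have hsq : ∀ t, (1 - (y t) ^ 2) * (1 - k ^ 2 * (y t) ^ 2) ≥ 0 := by
    intro t; rw [← hen t]; positivity
  have ht₀c : c < (y t₀) ^ 2 := by
    have h1 := hsq t₀
    by_contra hle
    push_neg at hle
    have hA : 1 - y t₀ ^ 2 < 0 := by linarith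
    have hB : 0 < 1 - k ^ 2 * y t₀ ^ 2 := by
      nlinarith [mul_le_mul_of_nonneg_left hle (sq_nonneg k)]
    nlinarith [mul_neg_of_neg_of_pos hA hB]
  have hcont : Continuous (fun t => (y t) ^ 2) := ((diffs hy).1.continuous).pow 2
  have hmem : (c : ℝ) ∈ Set.uIcc ((y 0) ^ 2) ((y t₀) ^ 2) := by
    rw [hy0, Set.mem_uIcc]
    left
    constructor
    · linarith
    · linarith
  obtain ⟨s, _, hs⟩ := intermediate_value_uIcc (a := (0:ℝ)) (b := t₀)
    (hcont.continuousOn) hmem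
  have hs' : (y s) ^ 2 = c := hs
  have := hsq s
  rw [hs'] at this
  nlinarith [mul_neg_of_neg_of_pos (show 1 - c < 0 by linarith)
    (show 0 < 1 - k ^ 2 * c by linarith)]

lemma y'bound (hk : k ∈ Set.Ioo (0:ℝ) 1)
    (hen : ∀ t, (deriv y t) ^ 2 = (1 - (y t) ^ 2) * (1 - k ^ 2 * (y t) ^ 2))
    (hyb : ∀ t, (y t) ^ 2 ≤ 1) :
    ∀ t, (deriv y t) ^ 2 ≤ 1 := by
  intro t
  have h1 := hen t
  have h2 := hyb t
  have h3 : (0:ℝ) ≤ (y t)^2 := sq_nonneg _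
  nlinarith [sq_nonneg k, sq_nonneg (k * y t)]
lemma felli_cont (hk : k ∈ Set.Ioo (0:ℝ) 1) {z : ℝ} (hz : -1 < z) (hz1 : z < 1) :
    ContinuousAt (fun s : ℝ => 1 / Real.sqrt ((1 - s ^ 2) * (1 - k ^ 2 * s ^ 2))) z := by
  have hpos : 0 < (1 - z ^ 2) * (1 - k ^ 2 * z ^ 2) := by
    have h1 : z ^ 2 < 1 := by nlinarith
    have h2 : k ^ 2 * z ^ 2 < 1 := by nlinarith [sq_nonneg (k*z), hk.1, hk.2]
    nlinarith
  apply ContinuousAt.div continuousAt_const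
  · exact (Real.continuous_sqrt.continuousAt).comp (by fun_prop)
  · positivity

set_option maxHeartbeats 1000000 in
lemma felli_integrable (hk : k ∈ Set.Ioo (0:ℝ) 1) :
    IntervalIntegrable (fun s : ℝ => 1 / Real.sqrt ((1 - s ^ 2) * (1 - k ^ 2 * s ^ 2)))
      MeasureTheory.volume 0 1 := by
  obtain ⟨hk0, hk1⟩ := hk
  have hC : (0:ℝ) < 1 - k ^ 2 := by nlinarith
  have hbase : IntervalIntegrable (fun s : ℝ => (1 - s) ^ (-(1/2) : ℝ))
      MeasureTheory.volume 0 1 := by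
    have h := intervalIntegral.intervalIntegrable_rpow' (a := (0:ℝ)) (b := 1)
      (r := (-(1/2) : ℝ)) (by norm_num)
    have h2 := h.comp_sub_left 1
    norm_num at h2
    exact h2.symm
  have hg : IntervalIntegrable (fun s : ℝ => (1 - k ^ 2)⁻¹ * ((1 - s) ^ (-(1/2) : ℝ)))
      MeasureTheory.volume 0 1 := by
    have := hbase.smul (1 - k ^ 2)⁻¹
    exact this
  apply hg.mono_fun
  · apply Measurable.aestronglyMeasurable
    apply Measurable.div measurable_const
    apply Measurable.comp Real.continuous_sqrt.measurable
    fun_prop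
  · rw [Filter.EventuallyLE, MeasureTheory.ae_restrict_iff' measurableSet_uIoc]
    apply Filter.Eventually.of_forall
    intro s hs
    rw [Set.uIoc_of_le (by norm_num : (0:ℝ) ≤ 1)] at hs
    obtain ⟨hs0, hs1⟩ := hs
    have hrpow_nonneg : (0:ℝ) ≤ (1 - s) ^ (-(1/2) : ℝ) :=
      Real.rpow_nonneg (by linarith) _
    simp only [Real.norm_eq_abs]
    have hs2 : s ^ 2 ≤ 1 := by nlinarith
    have hk2 : k ^ 2 * s ^ 2 ≤ 1 := by nlinarith [mul_nonneg (sq_nonneg k) (sq_nonneg s)]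
    have hA : (0:ℝ) ≤ (1 - s ^ 2) * (1 - k ^ 2 * s ^ 2) :=
      mul_nonneg (by linarith) (by linarith)
    rw [abs_of_nonneg (by positivity : (0:ℝ) ≤ 1 / Real.sqrt ((1 - s ^ 2) * (1 - k ^ 2 * s ^ 2))),
      abs_of_nonneg (by positivity)]
    rcases eq_or_lt_of_le hs1 with heq | hlt
    · subst heq
      simp [Real.zero_rpow (show (-(1/2):ℝ) ≠ 0 by norm_num)]
    · have hA' : (1 - k ^ 2) * (1 - s) ≤ (1 - s ^ 2) * (1 - k ^ 2 * s ^ 2) := by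
        nlinarith [sq_nonneg (k*s), sq_nonneg s, sq_nonneg (k*s - k)]
      have hApos : (0:ℝ) < (1 - k ^ 2) * (1 - s) := by nlinarith
      have h1 : 1 / Real.sqrt ((1 - s ^ 2) * (1 - k ^ 2 * s ^ 2))
          ≤ 1 / Real.sqrt ((1 - k ^ 2) * (1 - s)) :=
        one_div_le_one_div_of_le (Real.sqrt_pos.mpr hApos) (Real.sqrt_le_sqrt hA')
      have h2 : Real.sqrt ((1 - k ^ 2) * (1 - s)) =
          Real.sqrt (1 - k ^ 2) * Real.sqrt (1 - s) := Real.sqrt_mul (by linarith) _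
      have h3 : (1 - s) ^ (-(1/2) : ℝ) = (Real.sqrt (1 - s))⁻¹ := by
        rw [Real.rpow_neg (by linarith), Real.sqrt_eq_rpow]
      have hCle : 1 - k ^ 2 ≤ Real.sqrt (1 - k ^ 2) := by
        rw [Real.le_sqrt hC.le]
        all_goals nlinarith
      have hs1pos : (0:ℝ) < Real.sqrt (1 - s) := Real.sqrt_pos.mpr (by linarith)
      have h4 : 1 / Real.sqrt ((1 - k ^ 2) * (1 - s))
          ≤ (1 - k ^ 2)⁻¹ * (1 - s) ^ (-(1/2) : ℝ) := by
        rw [h2, h3, one_div, mul_inv]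
        have hinv : (Real.sqrt (1 - k ^ 2))⁻¹ ≤ (1 - k ^ 2)⁻¹ := by
          have h5 := one_div_le_one_div_of_le hC hCle
          simpa [one_div] using h5
        exact mul_le_mul_of_nonneg_right hinv (inv_nonneg.mpr hs1pos.le)
      linarith

lemma Kint_pos (hk : k ∈ Set.Ioo (0:ℝ) 1) : 0 < Kint k := by
  apply intervalIntegral.intervalIntegral_pos_of_pos_on (felli_integrable hk)
  · intro s hs
    have h1 : s ^ 2 < 1 := by nlinarith [hs.1, hs.2]
    have h2 : k ^ 2 * s ^ 2 < 1 := by nlinarith [sq_nonneg (k*s), hk.1, hk.2, hs.1, hs.2]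
    have hA : (0:ℝ) < (1 - s ^ 2) * (1 - k ^ 2 * s ^ 2) := by nlinarith
    positivity
  · norm_num
noncomputable def Fprim (k : ℝ) (z : ℝ) : ℝ :=
  ∫ s in (0:ℝ)..z, 1 / Real.sqrt ((1 - s ^ 2) * (1 - k ^ 2 * s ^ 2))

lemma Fprim_one (k : ℝ) : Fprim k 1 = Kint k := rfl

lemma Fprim_zero (k : ℝ) : Fprim k 0 = 0 := by
  simp [Fprim]

lemma Fprim_cont (hk : k ∈ Set.Ioo (0:ℝ) 1) : ContinuousOn (Fprim k) (Set.Icc 0 1) := by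
  have h := felli_integrable (k := k) hk
  have h2 : MeasureTheory.IntegrableOn
      (fun s : ℝ => 1 / Real.sqrt ((1 - s ^ 2) * (1 - k ^ 2 * s ^ 2)))
      (Set.uIcc 0 1) MeasureTheory.volume := by
    rw [Set.uIcc_of_le (by norm_num : (0:ℝ) ≤ 1)]
    exact (intervalIntegrable_iff_integrableOn_Icc_of_le (by norm_num)).mp h
  have := intervalIntegral.continuousOn_primitive_interval h2
  rwa [Set.uIcc_of_le (by norm_num : (0:ℝ) ≤ 1)] at this

lemma Fprim_hasDeriv (hk : k ∈ Set.Ioo (0:ℝ) 1) {z : ℝ} (hz0 : 0 ≤ z) (hz1 : z < 1) :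
    HasDerivAt (Fprim k) (1 / Real.sqrt ((1 - z ^ 2) * (1 - k ^ 2 * z ^ 2))) z := by
  have hcontz := felli_cont (k := k) hk (by linarith) hz1
  apply intervalIntegral.integral_hasDerivAt_right
  · apply (felli_integrable hk).mono_set
    rw [Set.uIcc_of_le (by norm_num : (0:ℝ) ≤ 1), Set.uIcc_of_le hz0]
    exact Set.Icc_subset_Icc le_rfl hz1.le
  · refine MeasureTheory.AEStronglyMeasurable.stronglyMeasurableAtFilter ?_
    apply Measurable.aestronglyMeasurable
    apply Measurable.div measurable_const
    apply Measurable.comp Real.continuous_sqrt.measurable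
    fun_prop
  · exact hcontz

lemma Fprim_lt_Kint (hk : k ∈ Set.Ioo (0:ℝ) 1) {z : ℝ} (hz0 : 0 ≤ z) (hz1 : z < 1) :
    Fprim k z < Kint k := by
  have hi1 : IntervalIntegrable
      (fun s : ℝ => 1 / Real.sqrt ((1 - s ^ 2) * (1 - k ^ 2 * s ^ 2)))
      MeasureTheory.volume 0 z := by
    apply (felli_integrable hk).mono_set
    rw [Set.uIcc_of_le (by norm_num : (0:ℝ) ≤ 1), Set.uIcc_of_le hz0]
    exact Set.Icc_subset_Icc le_rfl hz1.le
  have hi2 : IntervalIntegrable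
      (fun s : ℝ => 1 / Real.sqrt ((1 - s ^ 2) * (1 - k ^ 2 * s ^ 2)))
      MeasureTheory.volume z 1 := by
    apply (felli_integrable hk).mono_set
    rw [Set.uIcc_of_le (by norm_num : (0:ℝ) ≤ 1), Set.uIcc_of_le hz1.le]
    exact Set.Icc_subset_Icc hz0 le_rfl
  have hadd := intervalIntegral.integral_add_adjacent_intervals hi1 hi2
  have hpos : 0 < ∫ s in z..(1:ℝ), 1 / Real.sqrt ((1 - s ^ 2) * (1 - k ^ 2 * s ^ 2)) := by
    apply intervalIntegral.intervalIntegral_pos_of_pos_on hi2 _ hz1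
    intro s hs
    have h1 : s ^ 2 < 1 := by nlinarith [hs.1, hs.2]
    have h2 : k ^ 2 * s ^ 2 < 1 := by nlinarith [sq_nonneg (k*s), hk.1, hk.2]
    have : (0:ℝ) < (1 - s ^ 2) * (1 - k ^ 2 * s ^ 2) := by nlinarith
    positivity
  have : Fprim k z + (∫ s in z..(1:ℝ), 1 / Real.sqrt ((1 - s ^ 2) * (1 - k ^ 2 * s ^ 2)))
      = Kint k := hadd
  linarith
lemma key (hk : k ∈ Set.Ioo (0:ℝ) 1) (hy : ContDiff ℝ 2 y)
    (hode : ∀ x : ℝ, deriv (deriv y) x + (1 + k ^ 2) * y x - 2 * k ^ 2 * (y x) ^ 3 = 0)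
    (hy0 : y 0 = 0) (hy0' : deriv y 0 = 1) :
    y (Kint k) = 1 ∧ deriv y (Kint k) = 0 := by
  have hen := energy hy hode hy0 hy0'
  have hyb := ybound hk hy hen hy0
  obtain ⟨hd, hd'⟩ := diffs hy
  have hyc : Continuous y := hd.continuous
  have hy'c : Continuous (deriv y) := hd'.continuous
  set S : Set ℝ := {t | 0 ≤ t ∧ ∀ s ∈ Set.Icc 0 t, 0 < deriv y s} with hS
  have h0S : (0:ℝ) ∈ S := by
    refine ⟨le_rfl, ?_⟩
    intro s hs
    have hs0 : s = 0 := le_antisymm hs.2 hs.1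
    rw [hs0, hy0']; norm_num
  have hclaim : ∀ t ∈ S, (0 ≤ y t ∧ y t < 1) ∧ Fprim k (y t) = t := by
    intro t ht
    obtain ⟨ht0, htpos⟩ := ht
    have hmono : MonotoneOn y (Set.Icc 0 t) := by
      apply monotoneOn_of_deriv_nonneg (convex_Icc 0 t) hyc.continuousOn
      · exact fun s _ => (hd s).differentiableWithinAt
      · intro s hs
        rw [interior_Icc] at hs
        exact (htpos s ⟨hs.1.le, hs.2.le⟩).le
    have hy_nonneg : ∀ s ∈ Set.Icc 0 t, 0 ≤ y s := by
      intro s hs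
      have := hmono (Set.left_mem_Icc.mpr ht0) hs hs.1
      rwa [hy0] at this
    have hy_lt1 : ∀ s ∈ Set.Icc 0 t, y s < 1 := by
      intro s hs
      by_contra hge
      push_neg at hge
      have h2 := htpos s hs
      have hsq1 : (y s) ^ 2 = 1 := le_antisymm (hyb s) (by nlinarith)
      have h1 := hen s
      rw [hsq1] at h1
      nlinarith
    -- constancy of F ∘ y - id
    set G : ℝ → ℝ := fun s => Fprim k (y s) - s with hG
    have hmaps : Set.MapsTo y (Set.Icc 0 t) (Set.Icc 0 1) :=
      fun s hs => ⟨hy_nonneg s hs, (hy_lt1 s hs).le⟩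
    have hGcont : ContinuousOn G (Set.Icc 0 t) := by
      apply ContinuousOn.sub _ continuousOn_id
      exact (Fprim_cont hk).comp hyc.continuousOn hmaps
    have hGderiv : ∀ s ∈ Set.Ico 0 t, HasDerivWithinAt G 0 (Set.Ici s) s := by
      intro s hs
      have hsIcc : s ∈ Set.Icc 0 t := ⟨hs.1, hs.2.le⟩
      have h2 := htpos s hsIcc
      have hF := Fprim_hasDeriv (k := k) hk (hy_nonneg s hsIcc) (hy_lt1 s hsIcc)
      have hcomp := hF.comp s (hd s).hasDerivAt
      have hsqrt : Real.sqrt ((1 - (y s) ^ 2) * (1 - k ^ 2 * (y s) ^ 2)) = deriv y s := by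
        rw [← hen s]
        exact Real.sqrt_sq h2.le
      have hval : 1 / Real.sqrt ((1 - (y s) ^ 2) * (1 - k ^ 2 * (y s) ^ 2)) * deriv y s
          = 1 := by
        rw [hsqrt]
        field_simp
      have := hcomp.sub (hasDerivAt_id s)
      rw [hval] at this
      exact (by simpa using this.hasDerivWithinAt :
        HasDerivWithinAt (Fprim k ∘ y - id) 0 (Set.Ici s) s)
    have hconst := constant_of_has_deriv_right_zero hGcont hGderiv t
      (Set.right_mem_Icc.mpr ht0)
    have hgt : G t = G 0 := hconst
    rw [hG] at hgt
    simp only [hy0, Fprim_zero, sub_zero] at hgt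
    have htIcc : t ∈ Set.Icc 0 t := Set.right_mem_Icc.mpr ht0
    refine ⟨⟨hy_nonneg t htIcc, hy_lt1 t htIcc⟩, by linarith [hgt]⟩
  have hSsubK : ∀ t ∈ S, t < Kint k := by
    intro t ht
    obtain ⟨⟨h1, h2⟩, h3⟩ := hclaim t ht
    rw [← h3]
    exact Fprim_lt_Kint hk h1 h2
  have hbdd : BddAbove S := ⟨Kint k, fun t ht => (hSsubK t ht).le⟩
  set T := sSup S with hT
  have hT0 : 0 ≤ T := le_csSup hbdd h0S
  have hTK' : T ≤ Kint k := csSup_le ⟨0, h0S⟩ (fun t ht => (hSsubK t ht).le)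
  have hTpos : 0 < T := by
    have hopen : IsOpen {s : ℝ | 0 < deriv y s} := isOpen_lt continuous_const hy'c
    have hmem0 : (0:ℝ) ∈ {s : ℝ | 0 < deriv y s} := by
      simp only [Set.mem_setOf_eq, hy0']; norm_num
    obtain ⟨δ, hδ, hball⟩ := Metric.isOpen_iff.mp hopen 0 hmem0
    have hδS : δ / 2 ∈ S := by
      refine ⟨by linarith, ?_⟩
      intro s hs
      apply hball
      rw [Metric.mem_ball, Real.dist_eq, sub_zero, abs_of_nonneg hs.1]
      linarith [hs.2]
    calc 0 < δ / 2 := by linarith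
    _ ≤ T := le_csSup hbdd hδS
  have hpos_lt : ∀ s, 0 ≤ s → s < T → 0 < deriv y s := by
    intro s h0 hlt
    obtain ⟨t, htS, hst⟩ := exists_lt_of_lt_csSup ⟨0, h0S⟩ hlt
    exact htS.2 s ⟨h0, hst.le⟩
  have hmemS : ∀ s, 0 ≤ s → s < T → s ∈ S :=
    fun s h0 hlt => ⟨h0, fun r hr => hpos_lt r hr.1 (lt_of_le_of_lt hr.2 hlt)⟩
  have hy'T : deriv y T = 0 := by
    rcases lt_trichotomy (deriv y T) 0 with hneg | hzero | hpos
    · exfalso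
      have hhalf : 0 < deriv y (T / 2) := hpos_lt (T/2) (by linarith) (by linarith)
      have hmem : (0:ℝ) ∈ Set.uIcc (deriv y (T/2)) (deriv y T) := by
        rw [Set.mem_uIcc]
        right
        exact ⟨hneg.le, hhalf.le⟩
      obtain ⟨s, hsmem, hsval⟩ := intermediate_value_uIcc
        (a := T/2) (b := T) hy'c.continuousOn hmem
      rw [Set.uIcc_of_le (by linarith : T/2 ≤ T)] at hsmem
      have hsval' : deriv y s = 0 := hsval
      have hsT : s < T := by
        rcases eq_or_lt_of_le hsmem.2 with h | h
        · exfalso; rw [h] at hsval'; linarith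
        · exact h
      have := hpos_lt s (by linarith [hsmem.1]) hsT
      linarith
    · exact hzero
    · exfalso
      have hTS : T ∈ S := by
        refine ⟨hT0, ?_⟩
        intro s hs
        rcases eq_or_lt_of_le hs.2 with h | h
        · rw [h]; exact hpos
        · exact hpos_lt s hs.1 h
      have hopen : IsOpen {s : ℝ | 0 < deriv y s} := isOpen_lt continuous_const hy'c
      obtain ⟨δ, hδ, hball⟩ := Metric.isOpen_iff.mp hopen T hpos
      have hδS : T + δ / 2 ∈ S := by
        refine ⟨by linarith, ?_⟩
        intro s hs
        rcases le_or_gt s T with h | h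
        · exact hTS.2 s ⟨hs.1, h⟩
        · apply hball
          rw [Metric.mem_ball, Real.dist_eq, abs_of_pos (by linarith)]
          linarith [hs.2]
      have := le_csSup hbdd hδS
      linarith
  have hyT_le : y T ≤ 1 := by nlinarith [hyb T]
  haveI hne : (𝓝[Set.Ico 0 T] T).NeBot := by
    rw [← mem_closure_iff_nhdsWithin_neBot, closure_Ico hTpos.ne]
    exact ⟨hT0, le_rfl⟩
  have hyT_nonneg : 0 ≤ y T := by
    have hlim : Tendsto y (𝓝[Set.Ico 0 T] T) (𝓝 (y T)) :=
      (hyc.tendsto T).mono_left nhdsWithin_le_nhds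
    apply ge_of_tendsto hlim
    filter_upwards [self_mem_nhdsWithin] with s hs
    exact ((hclaim s (hmemS s hs.1 hs.2)).1).1
  have hFT : Fprim k (y T) = T := by
    have hcw : ContinuousWithinAt (fun s => Fprim k (y s)) (Set.Ico 0 T) T := by
      apply ContinuousWithinAt.comp ((Fprim_cont hk) (y T) ⟨hyT_nonneg, hyT_le⟩)
        hyc.continuousWithinAt
      intro s hs
      obtain ⟨⟨h1, h2⟩, _⟩ := hclaim s (hmemS s hs.1 hs.2)
      exact ⟨h1, h2.le⟩
    have hlim1 : Tendsto (fun s => Fprim k (y s)) (𝓝[Set.Ico 0 T] T)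
        (𝓝 (Fprim k (y T))) := hcw
    have hlim2 : Tendsto (fun s => Fprim k (y s)) (𝓝[Set.Ico 0 T] T) (𝓝 T) := by
      have heq : (fun s => Fprim k (y s)) =ᶠ[𝓝[Set.Ico 0 T] T] id := by
        filter_upwards [self_mem_nhdsWithin] with s hs
        exact (hclaim s (hmemS s hs.1 hs.2)).2
      rw [tendsto_congr' heq]
      exact tendsto_id.mono_left nhdsWithin_le_nhds
    exact tendsto_nhds_unique hlim1 hlim2
  have hyT : y T = 1 := by
    have h1 := hen T
    rw [hy'T] at h1
    have hsq1 : (y T) ^ 2 = 1 := by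
      refine le_antisymm (hyb T) ?_
      by_contra hlt
      push_neg at hlt
      have hky : k ^ 2 * (y T) ^ 2 < 1 := by nlinarith [sq_nonneg k, hyb T, hk.1, hk.2]
      nlinarith [mul_pos (show (0:ℝ) < 1 - (y T) ^ 2 by linarith)
        (show (0:ℝ) < 1 - k ^ 2 * (y T) ^ 2 by linarith)]
    have hfac : (y T - 1) * (y T + 1) = 0 := by linear_combination hsq1
    rcases mul_eq_zero.mp hfac with h | h
    · linarith
    · linarith
  have hTK : T = Kint k := by
    rw [hyT] at hFT
    rw [Fprim_one] at hFT
    exact hFT.symm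
  rw [← hTK]
  exact ⟨hyT, hy'T⟩
lemma lip (hk : k ∈ Set.Ioo (0:ℝ) 1) :
    LipschitzOnWith 9 (fun p : ℝ × ℝ => ((p.2 : ℝ), 2 * k ^ 2 * p.1 ^ 3 - (1 + k ^ 2) * p.1))
      (Metric.closedBall (0 : ℝ × ℝ) 1) := by
  rw [lipschitzOnWith_iff_dist_le_mul]
  intro p hp q hq
  have hp1 : |p.1| ≤ 1 := by
    have h1 : ‖p‖ ≤ 1 := mem_closedBall_zero_iff.mp hp
    have := norm_fst_le p
    simp only [Real.norm_eq_abs] at this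
    linarith
  have hq1 : |q.1| ≤ 1 := by
    have h1 : ‖q‖ ≤ 1 := mem_closedBall_zero_iff.mp hq
    have := norm_fst_le q
    simp only [Real.norm_eq_abs] at this
    linarith
  set d := dist p q with hd
  have hd0 : 0 ≤ d := dist_nonneg
  have h1 : |p.1 - q.1| ≤ d := by
    have h := norm_fst_le (p - q)
    simp only [Prod.fst_sub, Real.norm_eq_abs] at h
    rw [hd, dist_eq_norm]
    exact h
  have h2 : |p.2 - q.2| ≤ d := by
    have h := norm_snd_le (p - q)
    simp only [Prod.snd_sub, Real.norm_eq_abs] at h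
    rw [hd, dist_eq_norm]
    exact h
  rw [Prod.dist_eq]
  push_cast
  apply max_le
  · rw [Real.dist_eq]
    linarith
  · rw [Real.dist_eq]
    set a := p.1
    set b := q.1
    obtain ⟨ha1, ha2⟩ := abs_le.mp hp1
    obtain ⟨hb1, hb2⟩ := abs_le.mp hq1
    have hcube : |a ^ 3 - b ^ 3| ≤ 3 * |a - b| := by
      have hfac : a ^ 3 - b ^ 3 = (a - b) * (a ^ 2 + a * b + b ^ 2) := by ring
      rw [hfac, abs_mul]
      have hb3 : |a ^ 2 + a * b + b ^ 2| ≤ 3 := by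
        apply abs_le.mpr
        constructor <;> nlinarith
      nlinarith [abs_nonneg (a - b)]
    have hsplit : 2 * k ^ 2 * a ^ 3 - (1 + k ^ 2) * a - (2 * k ^ 2 * b ^ 3 - (1 + k ^ 2) * b)
        = 2 * k ^ 2 * (a ^ 3 - b ^ 3) - (1 + k ^ 2) * (a - b) := by ring
    rw [hsplit]
    have e1 : |2 * k ^ 2 * (a ^ 3 - b ^ 3)| = 2 * k ^ 2 * |a ^ 3 - b ^ 3| := by
      rw [abs_mul, abs_of_nonneg (by positivity : (0:ℝ) ≤ 2 * k ^ 2)]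
    have e2 : |(1 + k ^ 2) * (a - b)| = (1 + k ^ 2) * |a - b| := by
      rw [abs_mul, abs_of_nonneg (by positivity : (0:ℝ) ≤ 1 + k ^ 2)]
    have htri : |2 * k ^ 2 * (a ^ 3 - b ^ 3) - (1 + k ^ 2) * (a - b)|
        ≤ 2 * k ^ 2 * |a ^ 3 - b ^ 3| + (1 + k ^ 2) * |a - b| := by
      calc |2 * k ^ 2 * (a ^ 3 - b ^ 3) - (1 + k ^ 2) * (a - b)|
          ≤ |2 * k ^ 2 * (a ^ 3 - b ^ 3)| + |(1 + k ^ 2) * (a - b)| := abs_sub _ _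
        _ = 2 * k ^ 2 * |a ^ 3 - b ^ 3| + (1 + k ^ 2) * |a - b| := by rw [e1, e2]
    have hk2 : k ^ 2 ≤ 1 := by nlinarith [hk.1, hk.2]
    have hk0 : 0 ≤ k ^ 2 := sq_nonneg k
    nlinarith [abs_nonneg (a - b), abs_nonneg (a ^ 3 - b ^ 3)]

lemma ode_pair_unique (hk : k ∈ Set.Ioo (0:ℝ) 1) {f g : ℝ → ℝ × ℝ} {t₀ : ℝ}
    (hf : ∀ t, HasDerivAt f (((f t).2 : ℝ), 2 * k ^ 2 * (f t).1 ^ 3 - (1 + k ^ 2) * (f t).1) t)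
    (hfb : ∀ t, f t ∈ Metric.closedBall (0 : ℝ × ℝ) 1)
    (hg : ∀ t, HasDerivAt g (((g t).2 : ℝ), 2 * k ^ 2 * (g t).1 ^ 3 - (1 + k ^ 2) * (g t).1) t)
    (hgb : ∀ t, g t ∈ Metric.closedBall (0 : ℝ × ℝ) 1)
    (heq : f t₀ = g t₀) : ∀ t, f t = g t := by
  intro t
  have hmem : t₀ ∈ Set.Ioo (min t₀ t - 1) (max t₀ t + 1) := by
    constructor
    · have := min_le_left t₀ t
      linarith
    · have := le_max_left t₀ t
      linarith
  have huniq := ODE_solution_unique_of_mem_Icc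
    (v := fun _ (p : ℝ × ℝ) => ((p.2 : ℝ), 2 * k ^ 2 * p.1 ^ 3 - (1 + k ^ 2) * p.1))
    (s := fun _ => Metric.closedBall (0 : ℝ × ℝ) 1) (K := 9)
    (fun _ _ => lip hk) hmem
    (continuous_iff_continuousAt.mpr fun s => (hf s).continuousAt).continuousOn
    (fun s _ => hf s) (fun s _ => hfb s)
    (continuous_iff_continuousAt.mpr fun s => (hg s).continuousAt).continuousOn
    (fun s _ => hg s) (fun s _ => hgb s) heq
  apply huniq
  constructor
  · have := min_le_right t₀ t
    linarith
  · have := le_max_right t₀ t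
    linarith
lemma symm_lemma (hk : k ∈ Set.Ioo (0:ℝ) 1) (hy : ContDiff ℝ 2 y)
    (hode : ∀ x : ℝ, deriv (deriv y) x + (1 + k ^ 2) * y x - 2 * k ^ 2 * (y x) ^ 3 = 0)
    (hy0 : y 0 = 0) (hy0' : deriv y 0 = 1) :
    ∀ t, y (2 * Kint k - t) = y t ∧ deriv y (2 * Kint k - t) = - deriv y t := by
  have hen := energy hy hode hy0 hy0'
  have hyb := ybound hk hy hen hy0
  have hy'b := y'bound hk hen hyb
  obtain ⟨hd, hd'⟩ := diffs hy
  obtain ⟨hyK, hy'K⟩ := key hk hy hode hy0 hy0'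
  have hode' : ∀ t, deriv (deriv y) t = 2 * k ^ 2 * (y t) ^ 3 - (1 + k ^ 2) * (y t) :=
    fun t => by linarith [hode t]
  set Y : ℝ → ℝ × ℝ := fun t => (y t, deriv y t) with hYdef
  have hY : ∀ t, HasDerivAt Y (((Y t).2 : ℝ), 2 * k ^ 2 * (Y t).1 ^ 3 - (1 + k ^ 2) * (Y t).1) t := by
    intro t
    have h2 := (hd' t).hasDerivAt
    rw [hode' t] at h2
    exact ((hd t).hasDerivAt).prodMk h2
  have habs : ∀ t, |y t| ≤ 1 := fun t => abs_le.mpr ⟨by nlinarith [hyb t], by nlinarith [hyb t]⟩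
  have habs' : ∀ t, |deriv y t| ≤ 1 :=
    fun t => abs_le.mpr ⟨by nlinarith [hy'b t], by nlinarith [hy'b t]⟩
  have hYb : ∀ t, Y t ∈ Metric.closedBall (0 : ℝ × ℝ) 1 := by
    intro t
    rw [mem_closedBall_zero_iff, Prod.norm_def]
    apply max_le <;> rw [Real.norm_eq_abs]
    · exact habs t
    · exact habs' t
  set g : ℝ → ℝ × ℝ := fun t => (y (2 * Kint k - t), - deriv y (2 * Kint k - t)) with hgdef
  have hg : ∀ t, HasDerivAt g (((g t).2 : ℝ), 2 * k ^ 2 * (g t).1 ^ 3 - (1 + k ^ 2) * (g t).1) t := by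
    intro t
    have hinner : HasDerivAt (fun t : ℝ => 2 * Kint k - t) (-1) t := by
      simpa using (hasDerivAt_id t).const_sub (2 * Kint k)
    have hc1 : HasDerivAt (fun t : ℝ => y (2 * Kint k - t))
        (deriv y (2 * Kint k - t) * (-1)) t :=
      HasDerivAt.comp t ((hd _).hasDerivAt) hinner
    have hc2 : HasDerivAt (fun t : ℝ => deriv y (2 * Kint k - t))
        (deriv (deriv y) (2 * Kint k - t) * (-1)) t :=
      HasDerivAt.comp t ((hd' _).hasDerivAt) hinner
    have hres := hc1.prodMk hc2.neg
    have e1 : deriv y (2 * Kint k - t) * (-1) = ((g t).2 : ℝ) := by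
      simp only [hgdef]; ring
    have e2 : -(deriv (deriv y) (2 * Kint k - t) * (-1))
        = 2 * k ^ 2 * (g t).1 ^ 3 - (1 + k ^ 2) * (g t).1 := by
      rw [hode' (2 * Kint k - t)]; simp only [hgdef]; ring
    rw [e1, e2] at hres
    exact hres
  have hgb : ∀ t, g t ∈ Metric.closedBall (0 : ℝ × ℝ) 1 := by
    intro t
    rw [mem_closedBall_zero_iff, Prod.norm_def]
    apply max_le <;> rw [Real.norm_eq_abs]
    · exact habs _
    · rw [abs_neg]; exact habs' _
  have heq : Y (Kint k) = g (Kint k) := by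
    rw [hYdef, hgdef]
    simp only [show 2 * Kint k - Kint k = Kint k by ring]
    rw [hy'K]
    norm_num
  have huniq := ode_pair_unique hk hY hYb hg hgb heq
  intro t
  have h := huniq t
  rw [hYdef, hgdef] at h
  simp only [Prod.mk.injEq] at h
  exact ⟨h.1.symm, by linarith [h.2]⟩

lemma anti_lemma (hk : k ∈ Set.Ioo (0:ℝ) 1) (hy : ContDiff ℝ 2 y)
    (hode : ∀ x : ℝ, deriv (deriv y) x + (1 + k ^ 2) * y x - 2 * k ^ 2 * (y x) ^ 3 = 0)
    (hy0 : y 0 = 0) (hy0' : deriv y 0 = 1) :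
    ∀ t, y (t + 2 * Kint k) = - y t ∧ deriv y (t + 2 * Kint k) = - deriv y t := by
  have hen := energy hy hode hy0 hy0'
  have hyb := ybound hk hy hen hy0
  have hy'b := y'bound hk hen hyb
  obtain ⟨hd, hd'⟩ := diffs hy
  have hsymm := symm_lemma hk hy hode hy0 hy0'
  have hode' : ∀ t, deriv (deriv y) t = 2 * k ^ 2 * (y t) ^ 3 - (1 + k ^ 2) * (y t) :=
    fun t => by linarith [hode t]
  set Y : ℝ → ℝ × ℝ := fun t => (y t, deriv y t) with hYdef
  have hY : ∀ t, HasDerivAt Y (((Y t).2 : ℝ), 2 * k ^ 2 * (Y t).1 ^ 3 - (1 + k ^ 2) * (Y t).1) t := by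
    intro t
    have h2 := (hd' t).hasDerivAt
    rw [hode' t] at h2
    exact ((hd t).hasDerivAt).prodMk h2
  have habs : ∀ t, |y t| ≤ 1 := fun t => abs_le.mpr ⟨by nlinarith [hyb t], by nlinarith [hyb t]⟩
  have habs' : ∀ t, |deriv y t| ≤ 1 :=
    fun t => abs_le.mpr ⟨by nlinarith [hy'b t], by nlinarith [hy'b t]⟩
  have hYb : ∀ t, Y t ∈ Metric.closedBall (0 : ℝ × ℝ) 1 := by
    intro t
    rw [mem_closedBall_zero_iff, Prod.norm_def]
    apply max_le <;> rw [Real.norm_eq_abs]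
    · exact habs t
    · exact habs' t
  set g : ℝ → ℝ × ℝ := fun t => (- y (t - 2 * Kint k), - deriv y (t - 2 * Kint k)) with hgdef
  have hg : ∀ t, HasDerivAt g (((g t).2 : ℝ), 2 * k ^ 2 * (g t).1 ^ 3 - (1 + k ^ 2) * (g t).1) t := by
    intro t
    have hinner : HasDerivAt (fun t : ℝ => t - 2 * Kint k) 1 t := by
      simpa using (hasDerivAt_id t).sub_const (2 * Kint k)
    have hc1 : HasDerivAt (fun t : ℝ => y (t - 2 * Kint k))
        (deriv y (t - 2 * Kint k) * 1) t :=
      HasDerivAt.comp t ((hd _).hasDerivAt) hinner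
    have hc2 : HasDerivAt (fun t : ℝ => deriv y (t - 2 * Kint k))
        (deriv (deriv y) (t - 2 * Kint k) * 1) t :=
      HasDerivAt.comp t ((hd' _).hasDerivAt) hinner
    have hres := (hc1.neg).prodMk (hc2.neg)
    have e1 : -(deriv y (t - 2 * Kint k) * 1) = ((g t).2 : ℝ) := by
      simp only [hgdef]; ring
    have e2 : -(deriv (deriv y) (t - 2 * Kint k) * 1)
        = 2 * k ^ 2 * (g t).1 ^ 3 - (1 + k ^ 2) * (g t).1 := by
      rw [hode' (t - 2 * Kint k)]; simp only [hgdef]; ring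
    rw [e1, e2] at hres
    exact hres
  have hgb : ∀ t, g t ∈ Metric.closedBall (0 : ℝ × ℝ) 1 := by
    intro t
    rw [mem_closedBall_zero_iff, Prod.norm_def]
    apply max_le <;> rw [Real.norm_eq_abs, abs_neg]
    · exact habs _
    · exact habs' _
  have heq : Y (2 * Kint k) = g (2 * Kint k) := by
    rw [hYdef, hgdef]
    have h0 := hsymm 0
    rw [show 2 * Kint k - 0 = 2 * Kint k by ring] at h0
    simp only [show 2 * Kint k - 2 * Kint k = (0:ℝ) by ring]
    rw [h0.1, h0.2, hy0, hy0']
    norm_num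
  have huniq := ode_pair_unique hk hY hYb hg hgb heq
  intro t
  have h := huniq (t + 2 * Kint k)
  rw [hYdef, hgdef] at h
  simp only [Prod.mk.injEq, show t + 2 * Kint k - 2 * Kint k = t by ring] at h
  exact ⟨h.1, h.2⟩

lemma deriv_zero_odd (hk : k ∈ Set.Ioo (0:ℝ) 1) (hy : ContDiff ℝ 2 y)
    (hode : ∀ x : ℝ, deriv (deriv y) x + (1 + k ^ 2) * y x - 2 * k ^ 2 * (y x) ^ 3 = 0)
    (hy0 : y 0 = 0) (hy0' : deriv y 0 = 1) :
    ∀ m : ℕ, deriv y (Kint k + 2 * m * Kint k) = 0 := by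
  have hanti := anti_lemma hk hy hode hy0 hy0'
  have hK := (key hk hy hode hy0 hy0').2
  intro m
  induction m with
  | zero => simpa using hK
  | succ m ih =>
    have h := (hanti (Kint k + 2 * m * Kint k)).2
    rw [show Kint k + 2 * m * Kint k + 2 * Kint k
        = Kint k + 2 * (m + 1 : ℕ) * Kint k by push_cast; ring] at h
    rw [h, ih, neg_zero]

end

theorem stmt1 (k : ℝ) (hk : k ∈ Set.Ioo (0:ℝ) 1)
    (y : ℝ → ℝ) (hy : ContDiff ℝ 2 y)
    (hode : ∀ x : ℝ, deriv (deriv y) x + (1 + k ^ 2) * y x - 2 * k ^ 2 * (y x) ^ 3 = 0)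
    (hy0 : y 0 = 0) (hy0' : deriv y 0 = 1)
    (n : ℕ) (hn : 0 < n)
    (ε ρ : ℝ) (u : ℝ → ℝ)
    (hε : ε = 1 / (2 * n * Real.sqrt (1 + k ^ 2) * Kint k))
    (hρ : ρ = Real.sqrt (2 * k ^ 2 / (1 + k ^ 2)))
    (hu : ∀ x : ℝ, u x = ρ * y ((2 * n * x + 1) * Kint k)) :
    (∀ x ∈ Set.Icc (0:ℝ) 1,
      ε ^ 2 * deriv (deriv u) x + u x - (u x) ^ 3 = 0) ∧
    deriv u 0 = 0 ∧ deriv u 1 = 0 ∧ u 0 = ρ := by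
  obtain ⟨hd, hd'⟩ := diffs hy
  obtain ⟨hyK, hy'K⟩ := key hk hy hode hy0 hy0'
  have hKpos := Kint_pos hk
  have hnpos : (0:ℝ) < (n:ℝ) := Nat.cast_pos.mpr hn
  set c : ℝ := 2 * n * Kint k with hc
  have hcpos : 0 < c := by rw [hc]; positivity
  have hode' : ∀ t, deriv (deriv y) t = 2 * k ^ 2 * (y t) ^ 3 - (1 + k ^ 2) * (y t) :=
    fun t => by linarith [hode t]
  have hueq : u = fun x => ρ * y (c * x + Kint k) := by
    funext x
    rw [hu x]
    congr 1
    rw [hc]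
    ring_nf
  have hinner : ∀ x : ℝ, HasDerivAt (fun x : ℝ => c * x + Kint k) c x := by
    intro x
    simpa using ((hasDerivAt_id x).const_mul c).add_const (Kint k)
  have hderiv1 : ∀ x, HasDerivAt u (ρ * (deriv y (c * x + Kint k) * c)) x := by
    intro x
    rw [hueq]
    exact (HasDerivAt.comp x (hd _).hasDerivAt (hinner x)).const_mul ρ
  have hderiv_u : deriv u = fun x => ρ * (deriv y (c * x + Kint k) * c) :=
    funext fun x => (hderiv1 x).deriv
  have hderiv2 : ∀ x, HasDerivAt (deriv u)
      (ρ * (deriv (deriv y) (c * x + Kint k) * c * c)) x := by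
    intro x
    rw [hderiv_u]
    exact ((HasDerivAt.comp x (hd' _).hasDerivAt (hinner x)).mul_const c).const_mul ρ
  have h1k : (0:ℝ) < 1 + k ^ 2 := by positivity
  have hsqrt_pos : 0 < Real.sqrt (1 + k ^ 2) := Real.sqrt_pos.mpr h1k
  have hρ2 : ρ ^ 2 * (1 + k ^ 2) = 2 * k ^ 2 := by
    rw [hρ, Real.sq_sqrt (by positivity)]
    field_simp
  have hs : Real.sqrt (1 + k ^ 2) ^ 2 = 1 + k ^ 2 := Real.sq_sqrt h1k.le
  have hε1 : ε * (2 * (n:ℝ) * Real.sqrt (1 + k ^ 2) * Kint k) = 1 := by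
    rw [hε]
    field_simp
  have hsq := congrArg (fun z : ℝ => z ^ 2) hε1
  simp only [one_pow] at hsq
  have hε2 : ε ^ 2 * c ^ 2 * (1 + k ^ 2) = 1 := by
    rw [hc]
    linear_combination hsq - (ε ^ 2 * 4 * (n:ℝ) ^ 2 * Kint k ^ 2) * hs
  have hinv : (1 + k ^ 2) * (1 + k ^ 2)⁻¹ = 1 := mul_inv_cancel₀ h1k.ne'
  have heps : ε ^ 2 * c ^ 2 = (1 + k ^ 2)⁻¹ := by
    field_simp
    linear_combination hε2
  have hρρ : ρ ^ 2 = 2 * k ^ 2 * (1 + k ^ 2)⁻¹ := by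
    rw [hρ, Real.sq_sqrt (by positivity), div_eq_mul_inv]
  refine ⟨?_, ?_, ?_, ?_⟩
  · intro x _
    have h2 := (hderiv2 x).deriv
    rw [h2, hode' (c * x + Kint k)]
    rw [hueq]
    simp only
    set A := y (c * x + Kint k)
    linear_combination (ρ * (2 * k ^ 2 * A ^ 3 - (1 + k ^ 2) * A)) * heps
      - (ρ * A) * hinv - (ρ * A ^ 3) * hρρ
  · rw [(hderiv1 0).deriv, show c * 0 + Kint k = Kint k by ring, hy'K]
    ring
  · rw [(hderiv1 1).deriv, show c * 1 + Kint k = Kint k + 2 * (n:ℝ) * Kint k by rw [hc]; ring,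
      deriv_zero_odd hk hy hode hy0 hy0' n]
    ring
  · rw [hu 0, show (2 * (n:ℝ) * 0 + 1) * Kint k = Kint k by ring, hyK, mul_one]
end

section
/- Let ε > 0 and let u ∈ C²([0,1],ℝ) satisfy ε²u'' + u − u³ = 0 on [0,1] with u'(0) = u'(1) = 0; set ρ := u(0). Let λ ∈ ℂ satisfy λ² + 2λ − 3(1−ρ²)² ≠ 0. Then the complex-valued function φ(x) := (−(3+λ) + 3u(x)²)/(λ² + 2λ − 3(1−ρ²)²) satisfies ε²φ''(x) + (1 − 3u(x)²)φ(x) − λφ(x) = 1 for all x ∈ [0,1], together with φ'(0) = φ'(1) = 0. That is, φ = (L − λ)⁻¹[1] for the linearized operator L := ε²∂ₓₓ + (1 − 3u²) with Neumann boundary conditions. -/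
open Real Filter Set Complex

theorem stmt3 (ε : ℝ) (hε : 0 < ε) (u : ℝ → ℝ) (hu : ContDiff ℝ 2 u)
    (hode : ∀ x ∈ Set.Icc (0:ℝ) 1,
      ε ^ 2 * deriv (deriv u) x + u x - (u x) ^ 3 = 0)
    (hbc0 : deriv u 0 = 0) (hbc1 : deriv u 1 = 0)
    (ρ : ℝ) (hρ : ρ = u 0)
    (lam : ℂ) (hlam : lam ^ 2 + 2 * lam - 3 * (1 - (ρ:ℂ) ^ 2) ^ 2 ≠ 0)
    (φ : ℝ → ℂ)
    (hφ : ∀ x : ℝ, φ x = (-(3 + lam) + 3 * (u x : ℂ) ^ 2)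
        / (lam ^ 2 + 2 * lam - 3 * (1 - (ρ:ℂ) ^ 2) ^ 2)) :
    (∀ x ∈ Set.Icc (0:ℝ) 1,
      (ε : ℂ) ^ 2 * deriv (deriv φ) x + (1 - 3 * (u x : ℂ) ^ 2) * φ x - lam * φ x = 1) ∧
    deriv φ 0 = 0 ∧ deriv φ 1 = 0 := by
  set D : ℂ := lam ^ 2 + 2 * lam - 3 * (1 - (ρ:ℂ) ^ 2) ^ 2 with hD
  have hu2 : ContDiff ℝ 2 u := hu
  have h12 : ((1:WithTop ℕ∞) + 1) = 2 := by norm_num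
  have hu' : Differentiable ℝ u ∧ ContDiff ℝ 1 (deriv u) := by
    rw [← h12, contDiff_succ_iff_deriv] at hu2
    exact ⟨hu2.1, hu2.2.2⟩
  have hu1 : Differentiable ℝ u := hu'.1
  have hdu : Differentiable ℝ (deriv u) := hu'.2.differentiable one_ne_zero
  -- derivative of φ
  have hφ' : ∀ x : ℝ, HasDerivAt φ ((6 / D) * (u x : ℂ) * ((deriv u x : ℝ) : ℂ)) x := by
    intro x
    have h1 : HasDerivAt (fun y => (u y : ℂ)) (((deriv u x : ℝ) : ℂ)) x :=
      (hu1 x).hasDerivAt.ofReal_comp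
    have hsq : HasDerivAt (fun y => (u y : ℂ) ^ 2) (2 * (u x : ℂ) * ((deriv u x : ℝ) : ℂ)) x := by
      have h := h1.fun_mul h1
      have hf : (fun y => (u y : ℂ) ^ 2) = fun y => (u y : ℂ) * (u y : ℂ) := by
        funext y; ring
      rw [hf]; exact h.congr_deriv (by ring)
    have h2 : HasDerivAt (fun y => (-(3 + lam) + 3 * (u y : ℂ) ^ 2) / D)
        ((3 * (2 * (u x : ℂ) * ((deriv u x : ℝ) : ℂ))) / D) x :=
      (((hsq.const_mul (3:ℂ)).const_add (-(3+lam))).div_const D)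
    have : φ = fun y => (-(3 + lam) + 3 * (u y : ℂ) ^ 2) / D := funext hφ
    rw [this]
    convert h2 using 1; ring
  have hderφ : deriv φ = fun x => (6 / D) * (u x : ℂ) * ((deriv u x : ℝ) : ℂ) :=
    funext fun x => (hφ' x).deriv
  -- second derivative
  have hφ'' : ∀ x : ℝ, deriv (deriv φ) x
      = (6 / D) * (((deriv u x : ℝ) : ℂ) ^ 2 + (u x : ℂ) * ((deriv (deriv u) x : ℝ) : ℂ)) := by
    intro x
    rw [hderφ]
    have h1 : HasDerivAt (fun y => (u y : ℂ)) (((deriv u x : ℝ) : ℂ)) x :=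
      (hu1 x).hasDerivAt.ofReal_comp
    have h2 : HasDerivAt (fun y => ((deriv u y : ℝ) : ℂ)) (((deriv (deriv u) x : ℝ) : ℂ)) x :=
      (hdu x).hasDerivAt.ofReal_comp
    have h3 : HasDerivAt (fun y => (6 / D) * (u y : ℂ) * ((deriv u y : ℝ) : ℂ))
        ((6 / D) * (((deriv u x : ℝ) : ℂ) ^ 2 + (u x : ℂ) * ((deriv (deriv u) x : ℝ) : ℂ))) x := by
      have := ((h1.const_mul (6 / D)).fun_mul h2)
      exact this.congr_deriv (by ring)
    exact h3.deriv
  -- energy conservation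
  set E : ℝ → ℝ := fun x => ε ^ 2 * (deriv u x) ^ 2 + (u x) ^ 2 - (u x) ^ 4 / 2 with hE
  have hEdiff : Differentiable ℝ E := by
    fun_prop
  have hEder : ∀ x ∈ Set.Icc (0:ℝ) 1, deriv E x = 0 := by
    intro x hx
    have hDE : HasDerivAt E (2 * deriv u x *
        (ε ^ 2 * deriv (deriv u) x + u x - (u x) ^ 3)) x := by
      have h1 : HasDerivAt (fun y => ε ^ 2 * (deriv u y) ^ 2)
          (ε ^ 2 * (2 * deriv u x * deriv (deriv u) x)) x := by
        have := ((hdu x).hasDerivAt.fun_pow 2).const_mul (ε ^ 2)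
        exact this.congr_deriv (by ring)
      have h2 : HasDerivAt (fun y => (u y) ^ 2) (2 * u x * deriv u x) x := by
        simpa using (hu1 x).hasDerivAt.fun_pow 2
      have h3 : HasDerivAt (fun y => (u y) ^ 4 / 2) (4 * (u x) ^ 3 * deriv u x / 2) x := by
        simpa using ((hu1 x).hasDerivAt.pow 4).div_const 2
      have := (h1.fun_add h2).fun_sub h3
      exact this.congr_deriv (by ring)
    rw [hDE.deriv, hode x hx, mul_zero]
  have hEconst : ∀ x ∈ Set.Icc (0:ℝ) 1, E x = E 0 := by
    apply constant_of_derivWithin_zero (hEdiff.differentiableOn)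
    intro x hx
    rw [(hEdiff x).derivWithin (uniqueDiffOn_Icc (by norm_num) x (Ico_subset_Icc_self hx))]
    exact hEder x (Ico_subset_Icc_self hx)
  have hE0 : E 0 = ρ ^ 2 - ρ ^ 4 / 2 := by
    simp [hE, hbc0, hρ]
  constructor
  · intro x hx
    have henergy : ε ^ 2 * (deriv u x) ^ 2 = ρ ^ 2 - ρ ^ 4 / 2 - (u x) ^ 2 + (u x) ^ 4 / 2 := by
      have := hEconst x hx
      rw [hE0] at this
      simp only [hE] at this
      linarith
    have hode' : ε ^ 2 * deriv (deriv u) x = (u x) ^ 3 - u x := by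
      have := hode x hx; linarith
    rw [hφ'' x, hφ x]
    have key : (ε : ℂ) ^ 2 * ((6 / D) * (((deriv u x : ℝ) : ℂ) ^ 2 + (u x : ℂ) * ((deriv (deriv u) x : ℝ) : ℂ)))
        = (6 / D) * (((ρ:ℂ) ^ 2 - (ρ:ℂ) ^ 4 / 2 - (u x : ℂ) ^ 2 + (u x : ℂ) ^ 4 / 2)
            + (u x : ℂ) * ((u x : ℂ) ^ 3 - (u x : ℂ))) := by
      have e1 : ((ε:ℂ)) ^ 2 * ((deriv u x : ℝ) : ℂ) ^ 2
          = (ρ:ℂ) ^ 2 - (ρ:ℂ) ^ 4 / 2 - (u x : ℂ) ^ 2 + (u x : ℂ) ^ 4 / 2 := by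
        exact_mod_cast congrArg (Complex.ofReal) henergy
      have e2 : ((ε:ℂ)) ^ 2 * ((deriv (deriv u) x : ℝ) : ℂ) = (u x : ℂ) ^ 3 - (u x : ℂ) := by
        exact_mod_cast congrArg (Complex.ofReal) hode'
      calc (ε : ℂ) ^ 2 * ((6 / D) * (((deriv u x : ℝ) : ℂ) ^ 2 + (u x : ℂ) * ((deriv (deriv u) x : ℝ) : ℂ)))
          = (6 / D) * ((ε:ℂ) ^ 2 * ((deriv u x : ℝ) : ℂ) ^ 2
              + (u x : ℂ) * ((ε:ℂ) ^ 2 * ((deriv (deriv u) x : ℝ) : ℂ))) := by ring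
        _ = _ := by rw [e1, e2]
    rw [key]
    field_simp
    ring
  · constructor
    · rw [hderφ]; simp [hbc0]
    · rw [hderφ]; simp [hbc1]
end

section
/- Let ε > 0 and let u ∈ C²([0,1],ℝ) be a nonconstant solution of ε²u'' + u − u³ = 0 on [0,1] with u'(0) = u'(1) = 0; set ρ := u(0). Let λ ∈ ℝ be either −1 + √(1 + 3(1−ρ²)²) or −1 − √(1 + 3(1−ρ²)²) (so that λ² + 2λ − 3(1−ρ²)² = 0). Then the function ψ(x) := 3u(x)² − (3+λ) is not identically zero and satisfies ε²ψ''(x) + (1 − 3u(x)²)ψ(x) = λψ(x) for all x ∈ [0,1] with ψ'(0) = ψ'(1) = 0. Hence −1 ± √(1 + 3(1−ρ²)²) are eigenvalues of the Neumann linearized operator L := ε²∂ₓₓ + (1 − 3u²). -/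
open Real Filter Set

theorem stmt4 (ε : ℝ) (hε : 0 < ε) (u : ℝ → ℝ) (hu : ContDiff ℝ 2 u)
    (hode : ∀ x ∈ Set.Icc (0:ℝ) 1,
      ε ^ 2 * deriv (deriv u) x + u x - (u x) ^ 3 = 0)
    (hbc0 : deriv u 0 = 0) (hbc1 : deriv u 1 = 0)
    (hnc : ∃ x ∈ Set.Icc (0:ℝ) 1, ∃ x' ∈ Set.Icc (0:ℝ) 1, u x ≠ u x')
    (ρ : ℝ) (hρ : ρ = u 0)
    (lam : ℝ)
    (hlam : lam = -1 + Real.sqrt (1 + 3 * (1 - ρ ^ 2) ^ 2) ∨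
            lam = -1 - Real.sqrt (1 + 3 * (1 - ρ ^ 2) ^ 2))
    (ψ : ℝ → ℝ) (hψ : ∀ x : ℝ, ψ x = 3 * (u x) ^ 2 - (3 + lam)) :
    (∃ x ∈ Set.Icc (0:ℝ) 1, ψ x ≠ 0) ∧
    (∀ x ∈ Set.Icc (0:ℝ) 1,
      ε ^ 2 * deriv (deriv ψ) x + (1 - 3 * (u x) ^ 2) * ψ x = lam * ψ x) ∧
    deriv ψ 0 = 0 ∧ deriv ψ 1 = 0 := by
  have hud : Differentiable ℝ u := hu.differentiable (by norm_num)
  have hu1 : ContDiff ℝ 1 (deriv u) := by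
    have := (contDiff_succ_iff_deriv (n := 1)).mp (by exact_mod_cast hu)
    exact this.2.2
  have hu'd : Differentiable ℝ (deriv u) := hu1.differentiable (by norm_num)
  -- lam identity
  have harg : (0:ℝ) ≤ 1 + 3 * (1 - ρ ^ 2) ^ 2 := by positivity
  have hlam2 : lam ^ 2 + 2 * lam = 3 * (1 - ρ ^ 2) ^ 2 := by
    have hs := Real.sq_sqrt harg
    rcases hlam with h | h <;> (subst h; nlinarith [hs])
  -- energy conservation
  set E : ℝ → ℝ := fun x => ε ^ 2 * (deriv u x) ^ 2 + (u x) ^ 2 - (u x) ^ 4 / 2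
    with hE
  have hEderiv : ∀ x : ℝ, HasDerivAt E
      (2 * deriv u x * (ε ^ 2 * deriv (deriv u) x + u x - (u x) ^ 3)) x := by
    intro x
    have h1 : HasDerivAt u (deriv u x) x := (hud x).hasDerivAt
    have h2 : HasDerivAt (deriv u) (deriv (deriv u) x) x := (hu'd x).hasDerivAt
    have : HasDerivAt E
        (ε ^ 2 * (2 * deriv u x ^ 1 * deriv (deriv u) x)
          + 2 * u x ^ 1 * deriv u x
          - (4 * u x ^ 3 * deriv u x) / 2) x := by
      exact (((h2.pow 2).const_mul (ε ^ 2)).add (h1.pow 2)).sub ((h1.pow 4).div_const 2)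
    convert this using 1
    ring
  have hEconst : ∀ x ∈ Set.Icc (0:ℝ) 1, E x = E 0 := by
    apply constant_of_has_deriv_right_zero
    · exact fun x _ => ((hEderiv x).continuousAt).continuousWithinAt
    · intro x hx
      have h0 : (2 * deriv u x * (ε ^ 2 * deriv (deriv u) x + u x - (u x) ^ 3)) = 0 := by
        rw [hode x (Set.mem_Icc_of_Ico hx)]; ring
      exact (h0 ▸ (hEderiv x)).hasDerivWithinAt
  have hE0 : E 0 = ρ ^ 2 - ρ ^ 4 / 2 := by
    simp only [hE, hbc0, hρ]; ring
  have henergy : ∀ x ∈ Set.Icc (0:ℝ) 1,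
      ε ^ 2 * (deriv u x) ^ 2 = ρ ^ 2 - ρ ^ 4 / 2 - (u x) ^ 2 + (u x) ^ 4 / 2 := by
    intro x hx
    have := hEconst x hx
    rw [hE0] at this
    simp only [hE] at this
    linarith
  -- ψ as a function
  have hψfun : ψ = fun x => 3 * (u x) ^ 2 - (3 + lam) := funext hψ
  have hψ' : ∀ x : ℝ, HasDerivAt ψ (6 * u x * deriv u x) x := by
    intro x
    rw [hψfun]
    have h1 : HasDerivAt u (deriv u x) x := (hud x).hasDerivAt
    have h2 : HasDerivAt (fun x => 3 * (u x) ^ 2 - (3 + lam))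
        (3 * ((2:ℕ) * u x ^ (2 - 1) * deriv u x)) x :=
      ((h1.pow 2).const_mul 3).sub_const (3 + lam)
    convert h2 using 1
    push_cast
    ring
  have hdψ : deriv ψ = fun x => 6 * u x * deriv u x := funext fun x => (hψ' x).deriv
  have hψ'' : ∀ x : ℝ, deriv (deriv ψ) x
      = 6 * (deriv u x) ^ 2 + 6 * u x * deriv (deriv u) x := by
    intro x
    rw [hdψ]
    have h1 : HasDerivAt u (deriv u x) x := (hud x).hasDerivAt
    have h2 : HasDerivAt (deriv u) (deriv (deriv u) x) x := (hu'd x).hasDerivAt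
    have : HasDerivAt (fun x => 6 * u x * deriv u x)
        ((6 * deriv u x) * deriv u x + (6 * u x) * deriv (deriv u) x) x :=
      (h1.const_mul 6).mul h2
    rw [this.deriv]; ring
  refine ⟨?_, ?_, ?_, ?_⟩
  · -- ψ not identically zero
    by_contra h
    push_neg at h
    obtain ⟨x, hx, x', hx', hne⟩ := hnc
    have hx0 : 3 * (u x) ^ 2 - (3 + lam) = 0 := by rw [← hψ x]; exact h x hx
    have hx'0 : 3 * (u x') ^ 2 - (3 + lam) = 0 := by rw [← hψ x']; exact h x' hx'
    have hsq : (u x) ^ 2 = (u x') ^ 2 := by linarith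
    have huxne : u x ≠ 0 := by
      intro h0
      apply hne
      rw [h0]
      nlinarith [sq_nonneg (u x')]
    -- IVT: u takes the value 0 between x and x'
    have hopp : u x' = - u x := by
      rcases sq_eq_sq_iff_eq_or_eq_neg.mp hsq.symm with h1 | h1
      · exact absurd h1.symm hne
      · exact h1
    have h0mem : (0:ℝ) ∈ Set.uIcc (u x) (u x') := by
      rcases lt_or_gt_of_ne huxne with h1 | h1
      · exact Set.mem_uIcc.mpr (Or.inl ⟨le_of_lt h1, by rw [hopp]; linarith⟩)
      · exact Set.mem_uIcc.mpr (Or.inr ⟨by rw [hopp]; linarith, le_of_lt h1⟩)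
    have hsub : Set.uIcc x x' ⊆ Set.Icc (0:ℝ) 1 :=
      (Set.ordConnected_Icc).uIcc_subset hx hx'
    obtain ⟨y, hy, hy0⟩ := intermediate_value_uIcc
      (hud.continuous.continuousOn (s := Set.uIcc x x')) h0mem
    have hyIcc : y ∈ Set.Icc (0:ℝ) 1 := hsub hy
    have : 3 * (u y) ^ 2 - (3 + lam) = 0 := by rw [← hψ y]; exact h y hyIcc
    rw [hy0] at this
    apply huxne
    nlinarith [sq_nonneg (u x)]
  · -- eigenvalue equation
    intro x hx
    have hode' := hode x hx
    have hen := henergy x hx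
    rw [hψ x, hψ'' x]
    linear_combination (6:ℝ) * hen + 6 * (u x) * hode' + hlam2
  · rw [hdψ]; simp [hbc0]
  · rw [hdψ]; simp [hbc1]
end

section
/- Let n be a positive integer and define u(x) := √(2k²/(1+k²))·y((2nx+1)·K(k)) for x ∈ [0,1]. Then ∫₀¹ u(x)² dx = (2/(1+k²))·(1 − E(k)/K(k)). -/
open Real Filter Set
open intervalIntegral MeasureTheory Topology

/-- The complete elliptic integral of the second kind. -/
noncomputable def Eint (k : ℝ) : ℝ :=
  ∫ s in (0:ℝ)..1, Real.sqrt ((1 - k ^ 2 * s ^ 2) / (1 - s ^ 2))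

namespace SN

noncomputable def fK (k : ℝ) (s : ℝ) : ℝ := 1 / Real.sqrt ((1 - s ^ 2) * (1 - k ^ 2 * s ^ 2))

lemma fK_meas (k : ℝ) : Measurable (fK k) := by
  apply Measurable.div measurable_const
  exact (Measurable.sqrt (by fun_prop))

lemma fK_nonneg (k s : ℝ) : 0 ≤ fK k s := by
  unfold fK
  positivity

lemma fK_pos {k s : ℝ} (hk : k ∈ Set.Ioo (0:ℝ) 1) (hs : s ∈ Set.Ioo (-1:ℝ) 1) : 0 < fK k s := by
  have h1 : 0 < 1 - s ^ 2 := by nlinarith [hs.1, hs.2]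
  have h2 : 0 < 1 - k ^ 2 * s ^ 2 := by nlinarith [hk.1, hk.2, sq_nonneg s, sq_nonneg (k*s)]
  unfold fK
  positivity

lemma fK_contAt {k s : ℝ} (hk : k ∈ Set.Ioo (0:ℝ) 1) (hs : s ∈ Set.Ioo (-1:ℝ) 1) :
    ContinuousAt (fK k) s := by
  have h1 : 0 < 1 - s ^ 2 := by nlinarith [hs.1, hs.2]
  have h2 : 0 < 1 - k ^ 2 * s ^ 2 := by nlinarith [hk.1, hk.2, sq_nonneg s, sq_nonneg (k*s)]
  apply ContinuousAt.div continuousAt_const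
  · exact (Real.continuous_sqrt.continuousAt).comp (by fun_prop)
  · positivity

lemma intble_one_sub_rpow : IntervalIntegrable (fun s : ℝ => ((1:ℝ) - s) ^ (-(1/2) : ℝ))
    volume 0 1 := by
  have := (intervalIntegrable_rpow' (a := 0) (b := 1) (r := -(1/2)) (by norm_num)).comp_sub_left 1
  simpa using this.symm

lemma fK_le {k s : ℝ} (hk : k ∈ Set.Ioo (0:ℝ) 1) (hs : s ∈ Set.Ioc (0:ℝ) 1) :
    fK k s ≤ ((1:ℝ) - k ^ 2) ^ (-(1/2) : ℝ) * ((1:ℝ) - s) ^ (-(1/2) : ℝ) := by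
  rcases eq_or_lt_of_le hs.2 with h1 | h1
  · subst h1
    simp [fK]
  · have hs0 : 0 < s := hs.1
    have hks : 0 < 1 - k ^ 2 := by nlinarith [hk.1, hk.2]
    have hk2 : 1 - k ^ 2 ≤ 1 - k ^ 2 * s ^ 2 := by nlinarith [mul_nonneg (sq_nonneg k) (by nlinarith [hs.1, h1] : (0:ℝ) ≤ 1 - s ^ 2)]
    have h2 : (1 - s) * (1 - k ^ 2) ≤ (1 - s ^ 2) * (1 - k ^ 2 * s ^ 2) := by
      have e : (1 - s ^ 2) * (1 - k ^ 2 * s ^ 2) = (1 - s) * ((1 + s) * (1 - k ^ 2 * s ^ 2)) := by ring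
      rw [e]
      apply mul_le_mul_of_nonneg_left _ (by linarith)
      calc 1 - k ^ 2 ≤ 1 - k ^ 2 * s ^ 2 := hk2
        _ = 1 * (1 - k ^ 2 * s ^ 2) := (one_mul _).symm
        _ ≤ (1 + s) * (1 - k ^ 2 * s ^ 2) := by
            apply mul_le_mul_of_nonneg_right (by linarith) (by linarith)
    have hss : 0 < 1 - s := by linarith
    have h3 : Real.sqrt ((1 - s) * (1 - k ^ 2)) ≤ Real.sqrt ((1 - s ^ 2) * (1 - k ^ 2 * s ^ 2)) :=
      Real.sqrt_le_sqrt h2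
    have h4 : 0 < Real.sqrt ((1 - s) * (1 - k ^ 2)) := Real.sqrt_pos.mpr (by positivity)
    have h5 : fK k s ≤ 1 / Real.sqrt ((1 - s) * (1 - k ^ 2)) := by
      unfold fK
      apply one_div_le_one_div_of_le h4 h3
    refine h5.trans (le_of_eq ?_)
    rw [Real.sqrt_mul (by linarith) , one_div, mul_inv]
    rw [Real.rpow_neg (by linarith), Real.rpow_neg (by linarith),
      ← Real.sqrt_eq_rpow, ← Real.sqrt_eq_rpow, mul_comm]


/-- weighted integrability -/
lemma intble_mul {k : ℝ} (hk : k ∈ Set.Ioo (0:ℝ) 1) (w : ℝ → ℝ) (hw : Measurable w)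
    (hbd : ∀ s ∈ Set.Ioc (0:ℝ) 1, |w s| ≤ 1) :
    IntervalIntegrable (fun s => w s * fK k s) volume 0 1 := by
  apply IntervalIntegrable.mono_fun'
    (g := fun s => ((1:ℝ) - k ^ 2) ^ (-(1/2) : ℝ) * ((1:ℝ) - s) ^ (-(1/2) : ℝ))
  · exact intble_one_sub_rpow.const_mul _
  · exact ((hw.mul (fK_meas k)).aestronglyMeasurable).restrict
  · rw [Set.uIoc_of_le (by norm_num : (0:ℝ) ≤ 1)]
    apply (ae_restrict_iff' measurableSet_Ioc).mpr
    apply ae_of_all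
    intro s hs
    have h1 : |w s * fK k s| ≤ fK k s := by
      rw [abs_mul, abs_of_nonneg (fK_nonneg k s)]
      nlinarith [hbd s hs, fK_nonneg k s, abs_nonneg (w s)]
    calc ‖w s * fK k s‖ = |w s * fK k s| := rfl
      _ ≤ fK k s := h1
      _ ≤ _ := fK_le hk hs

lemma intble_fK {k : ℝ} (hk : k ∈ Set.Ioo (0:ℝ) 1) :
    IntervalIntegrable (fK k) volume 0 1 := by
  have := intble_mul hk (fun _ => 1) measurable_const (by norm_num)
  simpa using this

lemma intble_sq_fK {k : ℝ} (hk : k ∈ Set.Ioo (0:ℝ) 1) :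
    IntervalIntegrable (fun s => s ^ 2 * fK k s) volume 0 1 := by
  apply intble_mul hk _ (by fun_prop)
  intro s hs
  rw [abs_of_nonneg (sq_nonneg s)]
  nlinarith [hs.1, hs.2]

lemma Kpos {k : ℝ} (hk : k ∈ Set.Ioo (0:ℝ) 1) : 0 < Kint k := by
  have : Kint k = ∫ s in (0:ℝ)..1, fK k s := rfl
  rw [this]
  apply intervalIntegral_pos_of_pos_on (intble_fK hk)
  · intro x hx
    exact fK_pos hk ⟨by linarith [hx.1], hx.2⟩
  · norm_num

noncomputable def phi (k : ℝ) (x : ℝ) : ℝ := ∫ s in (0:ℝ)..x, fK k s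

lemma phi_one (k : ℝ) : phi k 1 = Kint k := rfl

lemma phi_hasDeriv {k x : ℝ} (hk : k ∈ Set.Ioo (0:ℝ) 1) (hx : x ∈ Set.Ioo (-1:ℝ) 1) :
    HasDerivAt (phi k) (fK k x) x := by
  apply intervalIntegral.integral_hasDerivAt_right
  · apply ContinuousOn.intervalIntegrable
    intro s hs
    refine (fK_contAt hk ?_).continuousWithinAt
    rcases Set.mem_uIcc.mp hs with ⟨h1, h2⟩ | ⟨h1, h2⟩ <;>
      exact ⟨by nlinarith [hx.1, hx.2], by nlinarith [hx.1, hx.2]⟩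
  · exact ⟨Set.univ, Filter.univ_mem, ((fK_meas k).aestronglyMeasurable).restrict⟩
  · exact fK_contAt hk hx

lemma phi_contOn {k : ℝ} (hk : k ∈ Set.Ioo (0:ℝ) 1) : ContinuousOn (phi k) (Set.Icc 0 1) := by
  have h := continuousOn_primitive_interval (a := 0) (b := 1) (μ := volume) (f := fK k) ?_
  · rwa [Set.uIcc_of_le (by norm_num : (0:ℝ) ≤ 1)] at h
  · rw [show Set.uIcc (0:ℝ) 1 = Set.Icc (0:ℝ) 1 from Set.uIcc_of_le (by norm_num),
      show Set.Icc (0:ℝ) 1 = Set.uIcc (0:ℝ) 1 from (Set.uIcc_of_le (by norm_num)).symm,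
      ← intervalIntegrable_iff']
    exact intble_fK hk

lemma phi_le_K {k : ℝ} (hk : k ∈ Set.Ioo (0:ℝ) 1) {x : ℝ} (hx : x ∈ Set.Icc (0:ℝ) 1) :
    phi k x ≤ Kint k := by
  have h1 : IntervalIntegrable (fK k) volume 0 x :=
    (intble_fK hk).mono_set (by rw [Set.uIcc_of_le hx.1, Set.uIcc_of_le (by norm_num : (0:ℝ) ≤ 1)]; exact Set.Icc_subset_Icc le_rfl hx.2)
  have h2 : IntervalIntegrable (fK k) volume x 1 :=
    (intble_fK hk).mono_set (by rw [Set.uIcc_of_le hx.2, Set.uIcc_of_le (by norm_num : (0:ℝ) ≤ 1)]; exact Set.Icc_subset_Icc hx.1 le_rfl)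
  have h3 := intervalIntegral.integral_add_adjacent_intervals h1 h2
  have h4 : 0 ≤ ∫ s in x..1, fK k s := intervalIntegral.integral_nonneg hx.2 (fun u _ => fK_nonneg k u)
  have : phi k x + ∫ s in x..1, fK k s = Kint k := h3
  linarith

lemma H_contOn {k : ℝ} (hk : k ∈ Set.Ioo (0:ℝ) 1) :
    ContinuousOn (fun x => ∫ s in (0:ℝ)..x, s ^ 2 * fK k s) (Set.Icc 0 1) := by
  have h := continuousOn_primitive_interval (a := (0:ℝ)) (b := 1) (μ := volume)
    (f := fun s => s ^ 2 * fK k s) ?_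
  · rwa [Set.uIcc_of_le (by norm_num : (0:ℝ) ≤ 1)] at h
  · rw [show Set.uIcc (0:ℝ) 1 = Set.Icc (0:ℝ) 1 from Set.uIcc_of_le (by norm_num),
      show Set.Icc (0:ℝ) 1 = Set.uIcc (0:ℝ) 1 from (Set.uIcc_of_le (by norm_num)).symm,
      ← intervalIntegrable_iff']
    exact intble_sq_fK hk

lemma Eint_eq {k : ℝ} (hk : k ∈ Set.Ioo (0:ℝ) 1) :
    Eint k = ∫ s in (0:ℝ)..1, (1 - k ^ 2 * s ^ 2) * fK k s := by
  apply intervalIntegral.integral_congr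
  intro s hs
  rw [Set.uIcc_of_le (by norm_num : (0:ℝ) ≤ 1), Set.mem_Icc] at hs
  rcases eq_or_lt_of_le hs.2 with h1 | h1
  · subst h1
    simp [fK]
  · have hb : 0 < 1 - s ^ 2 := by nlinarith [hs.1]
    have ha : 0 < 1 - k ^ 2 * s ^ 2 := by nlinarith [hk.1, hk.2, sq_nonneg (k*s), hs.1]
    have hsb : 0 < Real.sqrt (1 - s ^ 2) := Real.sqrt_pos.mpr hb
    have hsa : 0 < Real.sqrt (1 - k ^ 2 * s ^ 2) := Real.sqrt_pos.mpr ha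
    have h2 : Real.sqrt (1 - k ^ 2 * s ^ 2) * Real.sqrt (1 - k ^ 2 * s ^ 2) = 1 - k ^ 2 * s ^ 2 :=
      Real.mul_self_sqrt ha.le
    show Real.sqrt ((1 - k ^ 2 * s ^ 2) / (1 - s ^ 2))
      = (1 - k ^ 2 * s ^ 2) * (1 / Real.sqrt ((1 - s ^ 2) * (1 - k ^ 2 * s ^ 2)))
    rw [Real.sqrt_div ha.le]
    rw [Real.sqrt_mul hb.le]
    field_simp
    nlinarith [h2, hsa, hsb]

lemma K_sub_E {k : ℝ} (hk : k ∈ Set.Ioo (0:ℝ) 1) :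
    Kint k - Eint k = k ^ 2 * ∫ s in (0:ℝ)..1, s ^ 2 * fK k s := by
  have hw : IntervalIntegrable (fun s => (1 - k ^ 2 * s ^ 2) * fK k s) volume 0 1 := by
    apply intble_mul hk _ (by fun_prop)
    intro s hs
    have hks : k * s ≤ k := by nlinarith [hk.1, hs.2]
    have hks0 : 0 ≤ k * s := mul_nonneg hk.1.le hs.1.le
    have hk1 : k ^ 2 * s ^ 2 ≤ k ^ 2 := by nlinarith
    have hk2 : (0:ℝ) ≤ 1 - k ^ 2 * s ^ 2 := by nlinarith [hk.2, hk.1]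
    rw [abs_of_nonneg hk2]
    linarith [sq_nonneg (k*s), mul_nonneg (mul_nonneg hk.1.le hk.1.le) (mul_nonneg hs.1.le hs.1.le)]
  rw [Eint_eq hk, ← intervalIntegral.integral_const_mul]
  have hK : Kint k = ∫ s in (0:ℝ)..1, fK k s := rfl
  rw [hK, ← intervalIntegral.integral_sub (intble_fK hk) hw]
  apply intervalIntegral.integral_congr
  intro s _
  ring

lemma cubic_lip (k R : ℝ) (hR : 0 ≤ R) :
    LipschitzOnWith (Real.toNNReal (6 * k ^ 2 * R ^ 2 + (1 + k ^ 2) + 1))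
      (fun p : ℝ × ℝ => (p.2, 2 * k ^ 2 * p.1 ^ 3 - (1 + k ^ 2) * p.1))
      (Metric.closedBall (0 : ℝ × ℝ) R) := by
  rw [lipschitzOnWith_iff_norm_sub_le]
  intro p hp q hq
  rw [Metric.mem_closedBall, dist_zero_right] at hp hq
  have hp1 : |p.1| ≤ R := le_trans (norm_fst_le p) hp
  have hq1 : |q.1| ≤ R := le_trans (norm_fst_le q) hq
  have h1 : |p.1 - q.1| ≤ ‖p - q‖ := le_trans (le_of_eq rfl) (norm_fst_le (p - q))
  have h2 : |p.2 - q.2| ≤ ‖p - q‖ := le_trans (le_of_eq rfl) (norm_snd_le (p - q))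
  have hL0 : (0:ℝ) ≤ 6 * k ^ 2 * R ^ 2 + (1 + k ^ 2) + 1 := by positivity
  rw [Real.coe_toNNReal _ hL0]
  have key : ‖((p.2, 2 * k ^ 2 * p.1 ^ 3 - (1 + k ^ 2) * p.1) : ℝ × ℝ)
      - (q.2, 2 * k ^ 2 * q.1 ^ 3 - (1 + k ^ 2) * q.1)‖
      = max ‖p.2 - q.2‖ ‖(2 * k ^ 2 * p.1 ^ 3 - (1 + k ^ 2) * p.1) - (2 * k ^ 2 * q.1 ^ 3 - (1 + k ^ 2) * q.1)‖ := by
    rw [Prod.norm_def]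
    rfl
  rw [key]
  apply max_le
  · calc ‖p.2 - q.2‖ ≤ ‖p - q‖ := h2
      _ = 1 * ‖p - q‖ := (one_mul _).symm
      _ ≤ _ := by
          apply mul_le_mul_of_nonneg_right _ (norm_nonneg _)
          nlinarith [sq_nonneg k, sq_nonneg R, sq_nonneg (k*R)]
  · have e : (2 * k ^ 2 * p.1 ^ 3 - (1 + k ^ 2) * p.1) - (2 * k ^ 2 * q.1 ^ 3 - (1 + k ^ 2) * q.1)
        = (p.1 - q.1) * (2 * k ^ 2 * (p.1 ^ 2 + p.1 * q.1 + q.1 ^ 2) - (1 + k ^ 2)) := by ring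
    rw [e]
    show |_| ≤ _
    rw [abs_mul]
    have h3 : |2 * k ^ 2 * (p.1 ^ 2 + p.1 * q.1 + q.1 ^ 2) - (1 + k ^ 2)|
        ≤ 6 * k ^ 2 * R ^ 2 + (1 + k ^ 2) := by
      have b1 : |p.1 ^ 2 + p.1 * q.1 + q.1 ^ 2| ≤ 3 * R ^ 2 := by
        have := abs_mul p.1 q.1
        have h4 : |p.1 * q.1| ≤ R ^ 2 := by
          rw [abs_mul]
          calc |p.1| * |q.1| ≤ R * R := mul_le_mul hp1 hq1 (abs_nonneg _) hR
            _ = R ^ 2 := by ring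
        have h5 : p.1 ^ 2 ≤ R ^ 2 := by nlinarith [abs_nonneg p.1, sq_abs p.1]
        have h6 : q.1 ^ 2 ≤ R ^ 2 := by nlinarith [abs_nonneg q.1, sq_abs q.1]
        calc |p.1 ^ 2 + p.1 * q.1 + q.1 ^ 2| ≤ p.1 ^ 2 + |p.1 * q.1| + q.1 ^ 2 := by
              have := abs_add_le (p.1 ^ 2 + p.1 * q.1) (q.1 ^ 2)
              have := abs_add_le (p.1 ^ 2) (p.1 * q.1)
              have := sq_abs q.1
              have := sq_abs p.1
              simp only [abs_sq] at *
              linarith [abs_nonneg (p.1 * q.1)]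
          _ ≤ 3 * R ^ 2 := by linarith
      calc |2 * k ^ 2 * (p.1 ^ 2 + p.1 * q.1 + q.1 ^ 2) - (1 + k ^ 2)|
          ≤ |2 * k ^ 2 * (p.1 ^ 2 + p.1 * q.1 + q.1 ^ 2)| + |1 + k ^ 2| := abs_sub _ _
        _ ≤ 6 * k ^ 2 * R ^ 2 + (1 + k ^ 2) := by
            rw [abs_mul, abs_of_nonneg (by positivity : (0:ℝ) ≤ 2 * k ^ 2),
              abs_of_nonneg (by positivity : (0:ℝ) ≤ 1 + k ^ 2)]
            nlinarith [sq_nonneg k]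
    calc |p.1 - q.1| * |2 * k ^ 2 * (p.1 ^ 2 + p.1 * q.1 + q.1 ^ 2) - (1 + k ^ 2)|
        ≤ ‖p - q‖ * (6 * k ^ 2 * R ^ 2 + (1 + k ^ 2)) :=
          mul_le_mul h1 h3 (abs_nonneg _) (norm_nonneg _)
      _ = (6 * k ^ 2 * R ^ 2 + (1 + k ^ 2)) * ‖p - q‖ := mul_comm _ _
      _ ≤ _ := mul_le_mul_of_nonneg_right (by linarith) (norm_nonneg _)

lemma ode_unique (k : ℝ) (y₁ y₂ d₁ d₂ : ℝ → ℝ)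
    (hy₁ : ∀ t, HasDerivAt y₁ (d₁ t) t)
    (hd₁ : ∀ t, HasDerivAt d₁ (2 * k ^ 2 * (y₁ t) ^ 3 - (1 + k ^ 2) * y₁ t) t)
    (hy₂ : ∀ t, HasDerivAt y₂ (d₂ t) t)
    (hd₂ : ∀ t, HasDerivAt d₂ (2 * k ^ 2 * (y₂ t) ^ 3 - (1 + k ^ 2) * y₂ t) t)
    (t₀ : ℝ) (e₁ : y₁ t₀ = y₂ t₀) (e₂ : d₁ t₀ = d₂ t₀) (t : ℝ) : y₁ t = y₂ t := by
  set a := min t t₀ - 1 with ha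
  set b := max t t₀ + 1 with hb
  have hab : t₀ ∈ Set.Ioo a b := by
    constructor <;> simp only [ha, hb] <;>
      [linarith [min_le_right t t₀]; linarith [le_max_right t t₀]]
  have htab : t ∈ Set.Icc a b := by
    constructor <;> simp only [ha, hb] <;>
      [linarith [min_le_left t t₀]; linarith [le_max_left t t₀]]
  set F₁ : ℝ → ℝ × ℝ := fun s => (y₁ s, d₁ s) with hF₁
  set F₂ : ℝ → ℝ × ℝ := fun s => (y₂ s, d₂ s) with hF₂
  have hy₁c : Continuous y₁ := continuous_iff_continuousAt.mpr (fun s => (hy₁ s).continuousAt)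
  have hd₁c : Continuous d₁ := continuous_iff_continuousAt.mpr (fun s => (hd₁ s).continuousAt)
  have hy₂c : Continuous y₂ := continuous_iff_continuousAt.mpr (fun s => (hy₂ s).continuousAt)
  have hd₂c : Continuous d₂ := continuous_iff_continuousAt.mpr (fun s => (hd₂ s).continuousAt)
  have hF₁c : ContinuousOn F₁ (Set.Icc a b) := (hy₁c.prodMk hd₁c).continuousOn
  have hF₂c : ContinuousOn F₂ (Set.Icc a b) := (hy₂c.prodMk hd₂c).continuousOn
  obtain ⟨R₁, hR₁⟩ := (isCompact_Icc (a := a) (b := b)).exists_bound_of_continuousOn hF₁c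
  obtain ⟨R₂, hR₂⟩ := (isCompact_Icc (a := a) (b := b)).exists_bound_of_continuousOn hF₂c
  set R := max R₁ R₂ with hR
  have hstab : a ≤ b := by simp only [ha, hb]; linarith [min_le_left t t₀, le_max_left t t₀]
  have hR0 : 0 ≤ R := le_trans (norm_nonneg (F₁ a)) (le_trans (hR₁ a ⟨le_rfl, hstab⟩) (le_max_left _ _))
  set v : ℝ × ℝ → ℝ × ℝ := fun p => (p.2, 2 * k ^ 2 * p.1 ^ 3 - (1 + k ^ 2) * p.1) with hv
  have hlip := cubic_lip k R hR0
  have key := ODE_solution_unique_of_mem_Icc (v := fun _ => v)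
    (s := fun _ => Metric.closedBall (0 : ℝ × ℝ) R)
    (fun _ _ => hlip) hab hF₁c
    (fun s _ => ((hy₁ s).prodMk (hd₁ s)))
    (fun s hs => by
      rw [Metric.mem_closedBall, dist_zero_right]
      exact le_trans (hR₁ s (Set.Ioo_subset_Icc_self hs)) (le_max_left _ _))
    hF₂c
    (fun s _ => ((hy₂ s).prodMk (hd₂ s)))
    (fun s hs => by
      rw [Metric.mem_closedBall, dist_zero_right]
      exact le_trans (hR₂ s (Set.Ioo_subset_Icc_self hs)) (le_max_right _ _))
    (by rw [hF₁, hF₂]; simp only [e₁, e₂])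
  have := key htab
  exact congrArg Prod.fst this

end SN


set_option maxHeartbeats 2000000 in
theorem stmt5 (k : ℝ) (hk : k ∈ Set.Ioo (0:ℝ) 1)
    (y : ℝ → ℝ) (hy : ContDiff ℝ 2 y)
    (hode : ∀ x : ℝ, deriv (deriv y) x + (1 + k ^ 2) * y x - 2 * k ^ 2 * (y x) ^ 3 = 0)
    (hy0 : y 0 = 0) (hy0' : deriv y 0 = 1)
    (n : ℕ) (hn : 0 < n)
    (u : ℝ → ℝ)
    (hu : ∀ x : ℝ, u x = Real.sqrt (2 * k ^ 2 / (1 + k ^ 2)) * y ((2 * n * x + 1) * Kint k)) :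
    ∫ x in (0:ℝ)..1, (u x) ^ 2 = 2 / (1 + k ^ 2) * (1 - Eint k / Kint k) := by
  -- regularity
  have hdy : Differentiable ℝ y := hy.differentiable (by norm_num)
  have hy1 : ContDiff ℝ 1 (deriv y) := ((contDiff_succ_iff_deriv (n := 1)).mp (by exact_mod_cast hy)).2.2
  have hdy' : Differentiable ℝ (deriv y) := hy1.differentiable (by norm_num)
  have hY : ∀ t, HasDerivAt y (deriv y t) t := fun t => (hdy t).hasDerivAt
  have hD : ∀ t, HasDerivAt (deriv y) (2 * k ^ 2 * (y t) ^ 3 - (1 + k ^ 2) * y t) t := by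
    intro t
    have h := (hdy' t).hasDerivAt
    have e := hode t
    exact h.congr_deriv (by linarith)
  have hcontd : Continuous (deriv y) := hdy'.continuous
  have hconty : Continuous y := hdy.continuous
  -- energy identity
  have energy : ∀ t, (deriv y t) ^ 2 = (1 - (y t) ^ 2) * (1 - k ^ 2 * (y t) ^ 2) := by
    have hg : ∀ t, HasDerivAt
        (fun t => (deriv y t) ^ 2 + (1 + k ^ 2) * (y t) ^ 2 - k ^ 2 * (y t) ^ 4) 0 t := by
      intro t
      have h1 := (hD t).pow 2
      have h2 := ((hY t).pow 2).const_mul (1 + k ^ 2)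
      have h3 := ((hY t).pow 4).const_mul (k ^ 2)
      have h4 := (h1.add h2).sub h3
      exact h4.congr_deriv (by ring)
    have hgd : Differentiable ℝ (fun t => (deriv y t) ^ 2 + (1 + k ^ 2) * (y t) ^ 2 - k ^ 2 * (y t) ^ 4) :=
      fun t => ((hg t).differentiableAt)
    have hconst := is_const_of_deriv_eq_zero hgd (fun t => (hg t).deriv)
    intro t
    have h5 := hconst t 0
    simp only [hy0, hy0'] at h5
    norm_num at h5
    nlinarith [h5]
  -- solution stays in [-1, 1]
  have ybd : ∀ t, |y t| ≤ 1 := by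
    intro t
    by_contra hcon
    push_neg at hcon
    have hk1 : 1 < 1 / k := by rw [lt_div_iff₀ hk.1]; linarith [hk.2]
    set M := min (1/k) |y t| with hMdef
    have hM1 : 1 < M := lt_min hk1 hcon
    have hM2 : M ≤ 1 / k := min_le_left _ _
    have hM3 : M ≤ |y t| := min_le_right _ _
    set m := (1 + M) / 2 with hm
    have hm1 : 1 < m := by rw [hm]; linarith
    have hm2 : m < 1 / k := by rw [hm]; linarith
    have hm3 : m < |y t| := by rw [hm]; linarith
    have hmem : m ∈ Set.uIcc (|y 0|) (|y t|) := by
      rw [hy0, abs_zero, Set.uIcc_of_le (abs_nonneg _)]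
      exact ⟨by linarith, hm3.le⟩
    obtain ⟨s, _, hs2⟩ := intermediate_value_uIcc (f := fun s => |y s|) (a := 0) (b := t)
      (hconty.abs.continuousOn) hmem
    have he := energy s
    have hys : |y s| = m := hs2
    have hys2 : (y s) ^ 2 = m ^ 2 := by rw [← sq_abs, hys]
    have hkm1 : m * k < 1 := (lt_div_iff₀ hk.1).mp hm2
    have hmk0 : 0 ≤ m * k := mul_nonneg (by linarith) hk.1.le
    have hkm : k ^ 2 * m ^ 2 < 1 := by nlinarith [mul_pos (show (0:ℝ) < 1 - m * k by linarith) (show (0:ℝ) < m * k + 1 by linarith)]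
    have he2 : deriv y s ^ 2 = (1 - m ^ 2) * (1 - k ^ 2 * m ^ 2) := by rw [he, hys2]
    nlinarith [sq_nonneg (deriv y s), he2,
      mul_pos (show (0:ℝ) < m ^ 2 - 1 by nlinarith) (show (0:ℝ) < 1 - k ^ 2 * m ^ 2 by linarith)]
  -- pointwise consequences of energy
  have hk2pos : (0:ℝ) < 1 - k ^ 2 := by nlinarith [hk.1, hk.2]
  have facts : ∀ t, 0 < deriv y t →
      |y t| < 1 ∧ deriv y t = Real.sqrt ((1 - y t ^ 2) * (1 - k ^ 2 * y t ^ 2)) := by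
    intro t ht
    have hb := ybd t
    have h0 : y t ^ 2 ≤ 1 := by nlinarith [sq_abs (y t), abs_nonneg (y t)]
    have h1 : k ^ 2 * y t ^ 2 ≤ k ^ 2 := by
      have := mul_le_mul_of_nonneg_left h0 (sq_nonneg k)
      linarith
    have h2 : 0 < 1 - k ^ 2 * y t ^ 2 := by linarith
    have h3 : 0 < 1 - y t ^ 2 := by nlinarith [energy t]
    refine ⟨?_, ?_⟩
    · have h4 : y t ^ 2 < 1 := by linarith
      exact (sq_lt_one_iff_abs_lt_one (y t)).mp h4
    · rw [← energy t, Real.sqrt_sq_eq_abs, abs_of_pos ht]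
  have prod_one : ∀ s, 0 < deriv y s → SN.fK k (y s) * deriv y s = 1 := by
    intro s hs
    obtain ⟨habs, hsq⟩ := facts s hs
    have hpos : 0 < Real.sqrt ((1 - y s ^ 2) * (1 - k ^ 2 * y s ^ 2)) := by rw [← hsq]; exact hs
    show 1 / Real.sqrt ((1 - y s ^ 2) * (1 - k ^ 2 * y s ^ 2)) * deriv y s = 1
    rw [hsq, one_div, inv_mul_cancel₀ hpos.ne']
  -- the good set B
  set B : Set ℝ := {t | 0 ≤ t ∧ ∀ s ∈ Set.Icc (0:ℝ) t, 0 < deriv y s} with hBdef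
  have hB0 : (0:ℝ) ∈ B := ⟨le_rfl, fun s hs => by
    have h : s = 0 := le_antisymm hs.2 hs.1
    rw [h, hy0']; norm_num⟩
  have hBdown : ∀ t ∈ B, ∀ t', 0 ≤ t' → t' ≤ t → t' ∈ B := fun t ht t' h0 h1 =>
    ⟨h0, fun s hs => ht.2 s ⟨hs.1, hs.2.trans h1⟩⟩
  have hphiy : ∀ t ∈ B, SN.phi k (y t) = t := by
    intro t ht
    have hDAll : ∀ s ∈ Set.Icc (0:ℝ) t, HasDerivAt (fun s => SN.phi k (y s)) 1 s := by
      intro s hs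
      have hd := ht.2 s hs
      obtain ⟨habs, _⟩ := facts s hd
      have hyIoo : y s ∈ Set.Ioo (-1:ℝ) 1 := ⟨(abs_lt.mp habs).1, (abs_lt.mp habs).2⟩
      have h1 := (SN.phi_hasDeriv hk hyIoo).comp s (hY s)
      exact h1.congr_deriv (prod_one s hd)
    have key := eq_of_has_deriv_right_eq (a := 0) (b := t) (f' := fun _ => (1:ℝ))
      (fun s hs => (hDAll s (Set.Ico_subset_Icc_self hs)).hasDerivWithinAt)
      (fun s _ => (hasDerivAt_id s).hasDerivWithinAt)
      (continuousOn_of_forall_continuousAt fun s hs => (hDAll s hs).continuousAt)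
      continuousOn_id
      (by show SN.phi k (y 0) = 0; rw [hy0]; exact intervalIntegral.integral_same)
    exact key t ⟨ht.1, le_rfl⟩
  have hyB : ∀ t ∈ B, 0 ≤ y t ∧ y t < 1 := by
    intro t ht
    have hlt : y t < 1 := by
      have := (facts t (ht.2 t ⟨ht.1, le_rfl⟩)).1
      exact (abs_lt.mp this).2
    refine ⟨?_, hlt⟩
    rcases eq_or_lt_of_le ht.1 with h | h
    · rw [← h, hy0]
    · have mono : StrictMonoOn y (Set.Icc 0 t) := by
        apply strictMonoOn_of_deriv_pos (convex_Icc 0 t) hconty.continuousOn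
        intro s hs
        rw [interior_Icc] at hs
        exact ht.2 s ⟨hs.1.le, hs.2.le⟩
      have := mono ⟨le_rfl, h.le⟩ ⟨h.le, le_rfl⟩ h
      rw [hy0] at this
      exact this.le
  have hBsubK : ∀ t ∈ B, t ≤ Kint k := by
    intro t ht
    rw [← hphiy t ht]
    exact SN.phi_le_K hk ⟨(hyB t ht).1, (hyB t ht).2.le⟩
  have hBne : B.Nonempty := ⟨0, hB0⟩
  have hBbdd : BddAbove B := ⟨Kint k, fun t ht => hBsubK t ht⟩
  set T := sSup B with hTdef
  have hTle : T ≤ Kint k := csSup_le hBne hBsubK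
  have hT0 : (0:ℝ) ≤ T := le_csSup hBbdd hB0
  have hmemB : ∀ s, 0 ≤ s → s < T → s ∈ B := by
    intro s h0 hs
    obtain ⟨t, htB, hst⟩ := exists_lt_of_lt_csSup hBne hs
    exact hBdown t htB s h0 hst.le
  have hTpos : 0 < T := by
    have h1 : ∀ᶠ s in 𝓝 (0:ℝ), 0 < deriv y s := by
      have h := hcontd.continuousAt (x := (0:ℝ))
      rw [ContinuousAt, hy0'] at h
      exact h.eventually (eventually_gt_nhds one_pos)
    obtain ⟨ε, hε, hball⟩ := Metric.eventually_nhds_iff.mp h1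
    have hmemε : ε/2 ∈ B := by
      refine ⟨by linarith, fun s hs => hball ?_⟩
      rw [Real.dist_eq, sub_zero, abs_of_nonneg hs.1]
      linarith [hs.2]
    exact lt_of_lt_of_le (by linarith) (le_csSup hBbdd hmemε)
  have hTclos : T ∈ closure (Set.Ico (0:ℝ) T) := by
    rw [closure_Ico (by linarith : (0:ℝ) ≠ T)]
    exact ⟨hT0, le_rfl⟩
  haveI hneb : (𝓝[Set.Ico (0:ℝ) T] T).NeBot := mem_closure_iff_nhdsWithin_neBot.mp hTclos
  have hdT : deriv y T = 0 := by
    by_contra hne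
    have hd0 : 0 ≤ deriv y T := by
      have hlim : Tendsto (deriv y) (𝓝[Set.Ico (0:ℝ) T] T) (𝓝 (deriv y T)) :=
        (hcontd.tendsto T).mono_left nhdsWithin_le_nhds
      refine ge_of_tendsto hlim ?_
      filter_upwards [eventually_mem_nhdsWithin] with s hs
      exact ((hmemB s hs.1 hs.2).2 s ⟨hs.1, le_rfl⟩).le
    have hdpos : 0 < deriv y T := lt_of_le_of_ne hd0 (Ne.symm hne)
    have h1 : ∀ᶠ s in 𝓝 T, 0 < deriv y s :=
      (hcontd.continuousAt (x := T)).eventually (eventually_gt_nhds hdpos)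
    obtain ⟨ε, hε, hball⟩ := Metric.eventually_nhds_iff.mp h1
    have hmemε : T + ε/2 ∈ B := by
      refine ⟨by linarith, fun s hs => ?_⟩
      rcases lt_or_ge s T with h | h
      · exact (hmemB s hs.1 h).2 s ⟨hs.1, le_rfl⟩
      · apply hball
        rw [Real.dist_eq, abs_of_nonneg (by linarith)]
        linarith [hs.2]
    have := le_csSup hBbdd hmemε
    linarith
  have hyT : y T = 1 := by
    have h2 : 0 ≤ y T := by
      have hlim : Tendsto y (𝓝[Set.Ico (0:ℝ) T] T) (𝓝 (y T)) :=
        (hconty.tendsto T).mono_left nhdsWithin_le_nhds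
      refine ge_of_tendsto hlim ?_
      filter_upwards [eventually_mem_nhdsWithin] with s hs
      exact (hyB s (hmemB s hs.1 hs.2)).1
    have he := energy T
    rw [hdT] at he
    have hb := ybd T
    have h0 : y T ^ 2 ≤ 1 := by nlinarith [sq_abs (y T), abs_nonneg (y T)]
    have h1 : k ^ 2 * y T ^ 2 ≤ k ^ 2 := by
      have := mul_le_mul_of_nonneg_left h0 (sq_nonneg k)
      linarith
    have h3 : (1 - y T ^ 2) * (1 - k ^ 2 * y T ^ 2) = 0 := by linarith [he]
    have h4 : 1 - y T ^ 2 = 0 := by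
      rcases mul_eq_zero.mp h3 with h | h
      · exact h
      · linarith
    have h5 : (y T - 1) * (y T + 1) = 0 := by linarith [sq_nonneg (y T)]
    rcases mul_eq_zero.mp h5 with h | h
    · linarith
    · linarith
  have hTK : T = Kint k := by
    have f1 : Tendsto (fun s => SN.phi k (y s)) (𝓝[Set.Ico (0:ℝ) T] T) (𝓝 T) := by
      have hid : Tendsto (fun s : ℝ => s) (𝓝[Set.Ico (0:ℝ) T] T) (𝓝 T) :=
        Filter.tendsto_id.mono_left nhdsWithin_le_nhds
      apply Tendsto.congr' _ hid
      filter_upwards [eventually_mem_nhdsWithin] with s hs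
      exact (hphiy s (hmemB s hs.1 hs.2)).symm
    have f2 : Tendsto (fun s => SN.phi k (y s)) (𝓝[Set.Ico (0:ℝ) T] T) (𝓝 (Kint k)) := by
      have hyy : Tendsto y (𝓝[Set.Ico (0:ℝ) T] T) (𝓝[Set.Icc (0:ℝ) 1] 1) := by
        rw [tendsto_nhdsWithin_iff]
        constructor
        · have := (hconty.tendsto T).mono_left (nhdsWithin_le_nhds (s := Set.Ico (0:ℝ) T))
          rwa [hyT] at this
        · filter_upwards [eventually_mem_nhdsWithin] with s hs
          exact ⟨(hyB s (hmemB s hs.1 hs.2)).1, (hyB s (hmemB s hs.1 hs.2)).2.le⟩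
      have hphi1 : ContinuousWithinAt (SN.phi k) (Set.Icc 0 1) 1 :=
        (SN.phi_contOn hk) 1 ⟨by norm_num, le_rfl⟩
      have := hphi1.tendsto.comp hyy
      rwa [SN.phi_one] at this
    exact tendsto_nhds_unique f1 f2
  have hKpos : 0 < Kint k := SN.Kpos hk
  have hyK : y (Kint k) = 1 := by rw [← hTK]; exact hyT
  have hdK : deriv y (Kint k) = 0 := by rw [← hTK]; exact hdT
  have hmemBK : ∀ s, 0 ≤ s → s < Kint k → s ∈ B := by
    intro s h0 hs
    exact hmemB s h0 (by rw [hTK]; exact hs)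
  -- oddness
  have hodd : ∀ t, y (-t) = - y t := by
    have h := SN.ode_unique k (fun t => -y (-t)) y (fun t => deriv y (-t)) (deriv y)
      (fun t => by
        have a := (hY (-t)).comp t (hasDerivAt_neg t)
        have b := a.neg
        exact b.congr_deriv (by ring))
      (fun t => by
        have a := (hD (-t)).comp t (hasDerivAt_neg t)
        exact a.congr_deriv (by ring))
      hY hD 0
      (by show -y (-0) = y 0; rw [neg_zero, hy0, neg_zero])
      (by show deriv y (-0) = deriv y 0; rw [neg_zero])
    intro t
    have := h (-t)
    simp only [neg_neg] at this
    linarith [this]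
  -- reflection symmetry about K
  have hsym : ∀ t, y (2 * Kint k - t) = y t := by
    have hneg : ∀ t : ℝ, HasDerivAt (fun t : ℝ => 2 * Kint k - t) (-1) t := fun t =>
      (hasDerivAt_id t).const_sub (2 * Kint k)
    have h := SN.ode_unique k (fun t => y (2 * Kint k - t)) y
      (fun t => -deriv y (2 * Kint k - t)) (deriv y)
      (fun t => by
        have a := (hY (2 * Kint k - t)).comp t (hneg t)
        exact a.congr_deriv (by ring))
      (fun t => by
        have a := ((hD (2 * Kint k - t)).comp t (hneg t)).neg
        exact a.congr_deriv (by ring))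
      hY hD (Kint k)
      (by show y (2 * Kint k - Kint k) = y (Kint k)
          rw [show 2 * Kint k - Kint k = Kint k by ring])
      (by show -deriv y (2 * Kint k - Kint k) = deriv y (Kint k)
          rw [show 2 * Kint k - Kint k = Kint k by ring, hdK, neg_zero])
    exact h
  have hy2K : y (2 * Kint k) = 0 := by
    have := hsym 0
    rw [sub_zero, hy0] at this
    exact this
  have hd2K : deriv y (2 * Kint k) = -1 := by
    have hneg : HasDerivAt (fun t : ℝ => 2 * Kint k - t) (-1) (0:ℝ) :=
      (hasDerivAt_id 0).const_sub (2 * Kint k)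
    have a := (hY (2 * Kint k - 0)).comp 0 hneg
    have a' : HasDerivAt (fun t => y (2 * Kint k - t)) (deriv y (2 * Kint k - 0) * -1) 0 := a
    have hfun : (fun t => y (2 * Kint k - t)) = y := funext hsym
    rw [hfun] at a'
    have hd := a'.deriv
    rw [hy0', sub_zero] at hd
    linarith
  -- anti-periodicity
  have hper : ∀ t, y (t + 2 * Kint k) = - y t := by
    have hshift : ∀ t : ℝ, HasDerivAt (fun t : ℝ => t + 2 * Kint k) 1 t := fun t =>
      (hasDerivAt_id t).add_const (2 * Kint k)
    have h := SN.ode_unique k (fun t => -y (t + 2 * Kint k)) y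
      (fun t => -deriv y (t + 2 * Kint k)) (deriv y)
      (fun t => by
        have a := ((hY (t + 2 * Kint k)).comp t (hshift t)).neg
        exact a.congr_deriv (by ring))
      (fun t => by
        have a := ((hD (t + 2 * Kint k)).comp t (hshift t)).neg
        exact a.congr_deriv (by ring))
      hY hD 0
      (by show -y (0 + 2 * Kint k) = y 0
          rw [zero_add, hy2K, hy0, neg_zero])
      (by show -deriv y (0 + 2 * Kint k) = deriv y 0
          rw [zero_add, hd2K, hy0', neg_neg])
    intro t
    have h2 : -y (t + 2 * Kint k) = y t := h t
    linarith [h2]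
  have hper2 : Function.Periodic (fun t => (y t) ^ 2) (2 * Kint k) := by
    intro t
    simp only
    rw [hper t]
    ring
  have hint : ∀ a b : ℝ, IntervalIntegrable (fun t => (y t) ^ 2) volume a b :=
    fun a b => (hconty.pow 2).intervalIntegrable a b
  -- improper substitution: ∫₀^K y² = ∫₀¹ s² fK
  have hH1 : (∫ t in (0:ℝ)..Kint k, (y t) ^ 2) = ∫ s in (0:ℝ)..1, s ^ 2 * SN.fK k s := by
    have heq : ∀ b, 0 ≤ b → b < Kint k →
        (∫ t in (0:ℝ)..b, (y t) ^ 2) = ∫ s in (0:ℝ)..(y b), s ^ 2 * SN.fK k s := by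
      intro b h0 hb
      have hbB : b ∈ B := hmemBK b h0 hb
      have huIcc : Set.uIcc (0:ℝ) b = Set.Icc 0 b := Set.uIcc_of_le h0
      have hmemx : ∀ x ∈ Set.Icc (0:ℝ) b, x ∈ B := fun x hx => hBdown b hbB x hx.1 hx.2
      have hg : ContinuousOn (fun s => s ^ 2 * SN.fK k s) (y '' Set.uIcc (0:ℝ) b) := by
        intro v hv
        obtain ⟨x, hx, rfl⟩ := hv
        rw [huIcc] at hx
        have habs := (facts x ((hmemx x hx).2 x ⟨hx.1, le_rfl⟩)).1
        exact ((continuous_pow 2).continuousAt.mul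
          (SN.fK_contAt hk ⟨(abs_lt.mp habs).1, (abs_lt.mp habs).2⟩)).continuousWithinAt
      have hsub := intervalIntegral.integral_comp_smul_deriv'' (a := (0:ℝ)) (b := b)
        (f := y) (f' := deriv y) (g := fun s => s ^ 2 * SN.fK k s)
        hconty.continuousOn
        (fun x _ => (hY x).hasDerivWithinAt)
        hcontd.continuousOn
        hg
      rw [hy0] at hsub
      rw [← hsub]
      apply intervalIntegral.integral_congr
      intro x hx
      rw [huIcc] at hx
      have hd := (hmemx x hx).2 x ⟨hx.1, le_rfl⟩
      show (y x) ^ 2 = deriv y x • ((fun s => s ^ 2 * SN.fK k s) ∘ y) x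
      show (y x) ^ 2 = deriv y x * ((y x) ^ 2 * SN.fK k (y x))
      have hpo := prod_one x hd
      nlinarith [hpo]
    have hGcont : Continuous (fun b => ∫ t in (0:ℝ)..b, (y t) ^ 2) :=
      intervalIntegral.continuous_primitive hint 0
    haveI hnebK : (𝓝[Set.Ico (0:ℝ) (Kint k)] (Kint k)).NeBot := by
      apply mem_closure_iff_nhdsWithin_neBot.mp
      rw [closure_Ico (by linarith : (0:ℝ) ≠ Kint k)]
      exact ⟨hKpos.le, le_rfl⟩
    have f1 : Tendsto (fun b => ∫ t in (0:ℝ)..b, (y t) ^ 2)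
        (𝓝[Set.Ico (0:ℝ) (Kint k)] (Kint k)) (𝓝 (∫ t in (0:ℝ)..Kint k, (y t) ^ 2)) :=
      (hGcont.tendsto _).mono_left nhdsWithin_le_nhds
    have f2 : Tendsto (fun b => ∫ s in (0:ℝ)..(y b), s ^ 2 * SN.fK k s)
        (𝓝[Set.Ico (0:ℝ) (Kint k)] (Kint k)) (𝓝 (∫ s in (0:ℝ)..1, s ^ 2 * SN.fK k s)) := by
      have hyy : Tendsto y (𝓝[Set.Ico (0:ℝ) (Kint k)] (Kint k)) (𝓝[Set.Icc (0:ℝ) 1] 1) := by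
        rw [tendsto_nhdsWithin_iff]
        constructor
        · have := (hconty.tendsto (Kint k)).mono_left
            (nhdsWithin_le_nhds (s := Set.Ico (0:ℝ) (Kint k)))
          rwa [hyK] at this
        · filter_upwards [eventually_mem_nhdsWithin] with s hs
          exact ⟨(hyB s (hmemBK s hs.1 hs.2)).1, (hyB s (hmemBK s hs.1 hs.2)).2.le⟩
      exact ((SN.H_contOn hk 1 ⟨by norm_num, le_rfl⟩).tendsto.comp hyy)
    have hev : (fun b => ∫ s in (0:ℝ)..(y b), s ^ 2 * SN.fK k s)
        =ᶠ[𝓝[Set.Ico (0:ℝ) (Kint k)] (Kint k)] (fun b => ∫ t in (0:ℝ)..b, (y t) ^ 2) := by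
      filter_upwards [eventually_mem_nhdsWithin] with s hs
      exact (heq s hs.1 hs.2).symm
    exact tendsto_nhds_unique f1 (f2.congr' hev)
  set J := ∫ t in (0:ℝ)..Kint k, (y t) ^ 2 with hJdef
  -- reflection: ∫_{-K}^0 = J
  have h5 : (∫ t in (-Kint k)..(0:ℝ), (y t) ^ 2) = J := by
    have hcn := intervalIntegral.integral_comp_neg (a := (0:ℝ)) (b := Kint k)
      (fun t => (y t) ^ 2)
    rw [neg_zero] at hcn
    rw [← hcn]
    apply intervalIntegral.integral_congr
    intro x _
    show y (-x) ^ 2 = y x ^ 2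
    rw [hodd x]
    ring
  -- splitting ∫_{-K}^{K}
  have h4 : (∫ t in (-Kint k)..(Kint k), (y t) ^ 2) = 2 * J := by
    rw [← intervalIntegral.integral_add_adjacent_intervals (hint (-Kint k) 0) (hint 0 (Kint k))]
    rw [h5]
    rw [hJdef]
    ring
  -- periodicity steps
  have h3a := hper2.intervalIntegral_add_zsmul_eq (n : ℤ) (Kint k) hint
  have h3b := hper2.intervalIntegral_add_eq (Kint k) (-Kint k)
  have h3c : (∫ t in (Kint k)..(Kint k + (n : ℤ) • (2 * Kint k)), (y t) ^ 2)
      = (n : ℝ) * (2 * J) := by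
    rw [h3a, h3b, show -Kint k + 2 * Kint k = Kint k by ring, h4]
    simp
  -- linear substitution
  have hn0 : (0:ℝ) < (n:ℝ) := by exact_mod_cast hn
  have hcne : (2 * (n:ℝ) * Kint k) ≠ 0 := by positivity
  have step2 := intervalIntegral.integral_comp_mul_add (a := (0:ℝ)) (b := 1)
      (f := fun t => (y t) ^ 2) hcne (Kint k)
  have step2' : (∫ x in (0:ℝ)..1, (y ((2 * (n:ℝ) * Kint k) * x + Kint k)) ^ 2)
      = (2 * (n:ℝ) * Kint k)⁻¹ * ((n:ℝ) * (2 * J)) := by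
    rw [step2]
    rw [show 2 * (n:ℝ) * Kint k * 0 + Kint k = Kint k by ring,
      show 2 * (n:ℝ) * Kint k * 1 + Kint k = Kint k + (n : ℤ) • (2 * Kint k) by
        rw [zsmul_eq_mul]; push_cast; ring]
    rw [h3c]
    simp
  have step1 : (∫ x in (0:ℝ)..1, (u x) ^ 2)
      = (2 * k ^ 2 / (1 + k ^ 2)) * ∫ x in (0:ℝ)..1, (y ((2 * (n:ℝ) * Kint k) * x + Kint k)) ^ 2 := by
    rw [← intervalIntegral.integral_const_mul]
    apply intervalIntegral.integral_congr
    intro x _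
    show (u x) ^ 2 = 2 * k ^ 2 / (1 + k ^ 2) * (y ((2 * (n:ℝ) * Kint k) * x + Kint k)) ^ 2
    rw [hu x, mul_pow, Real.sq_sqrt (by positivity)]
    rw [show (2 * (n:ℝ) * Kint k) * x + Kint k = (2 * (n:ℝ) * x + 1) * Kint k by ring]
  -- final arithmetic
  have hKE := SN.K_sub_E hk
  rw [← hH1] at hKE
  have hKne : Kint k ≠ 0 := ne_of_gt hKpos
  have h1k2 : (1:ℝ) + k ^ 2 ≠ 0 := by positivity
  rw [step1, step2']
  rw [show Eint k = Kint k - k ^ 2 * J by linarith]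
  field_simp
  ring
end

section
/- Let n be a positive integer and, for each ε ∈ (0, 1/(nπ)), let k(ε) ∈ (0,1) denote the unique solution of √(1+k²)·K(k) = 1/(2nε). Then (1 − k(ε)²)·exp(1/(√2·n·ε)) → 16 as ε → 0⁺. -/
open Real Filter Set

open MeasureTheory

noncomputable def G (a t : ℝ) : ℝ :=
  1 / (Real.sqrt (1 + t ^ 2) * Real.sqrt (1 + a ^ 2 * t ^ 2))

lemma sqrt1t_pos (t : ℝ) : 0 < Real.sqrt (1 + t ^ 2) :=
  Real.sqrt_pos.2 (by positivity)

lemma hasDerivAt_subst (t : ℝ) :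
    HasDerivAt (fun t : ℝ => t / Real.sqrt (1 + t ^ 2))
      (1 / ((1 + t ^ 2) * Real.sqrt (1 + t ^ 2))) t := by
  have h0 : (0:ℝ) < 1 + t ^ 2 := by positivity
  have hs : HasDerivAt (fun t : ℝ => Real.sqrt (1 + t ^ 2))
      (t / Real.sqrt (1 + t ^ 2)) t := by
    have h1 : HasDerivAt (fun t : ℝ => 1 + t ^ 2) (2 * t) t := by
      simpa using ((hasDerivAt_pow 2 t).const_add 1)
    have := (Real.hasDerivAt_sqrt h0.ne').comp t h1
    refine this.congr_deriv ?_
    field_simp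
  have := (hasDerivAt_id t).div hs (sqrt1t_pos t).ne'
  refine this.congr_deriv ?_
  have hsq : Real.sqrt (1 + t ^ 2) ^ 2 = 1 + t ^ 2 := Real.sq_sqrt h0.le
  field_simp
  simp only [id]; rw [hsq]; ring

lemma subst_inv (t : ℝ) :
    (t / Real.sqrt (1 + t ^ 2)) / Real.sqrt (1 - (t / Real.sqrt (1 + t ^ 2)) ^ 2) = t := by
  have h0 : (0:ℝ) < 1 + t ^ 2 := by positivity
  have hp : 0 < Real.sqrt (1 + t ^ 2) := Real.sqrt_pos.2 h0
  have hsq : Real.sqrt (1 + t ^ 2) ^ 2 = 1 + t ^ 2 := Real.sq_sqrt h0.le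
  have h1 : 1 - (t / Real.sqrt (1 + t ^ 2)) ^ 2 = (1 + t ^ 2)⁻¹ := by
    rw [div_pow, hsq]; field_simp; ring
  rw [h1, Real.sqrt_inv]
  field_simp

lemma subst_image :
    Set.Ioo (0:ℝ) 1 = (fun t : ℝ => t / Real.sqrt (1 + t ^ 2)) '' Set.Ioi 0 := by
  ext s
  constructor
  · rintro ⟨hs0, hs1⟩
    have h0 : (0:ℝ) < 1 - s ^ 2 := by nlinarith
    have hp : 0 < Real.sqrt (1 - s ^ 2) := Real.sqrt_pos.2 h0
    have hsq : Real.sqrt (1 - s ^ 2) ^ 2 = 1 - s ^ 2 := Real.sq_sqrt h0.le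
    refine ⟨s / Real.sqrt (1 - s ^ 2), Set.mem_Ioi.2 (by positivity), ?_⟩
    have h1 : 1 + (s / Real.sqrt (1 - s ^ 2)) ^ 2 = (1 - s ^ 2)⁻¹ := by
      rw [div_pow, hsq]; field_simp; ring
    simp only [h1, Real.sqrt_inv]
    field_simp
  · rintro ⟨t, ht, rfl⟩
    have ht' : 0 < t := ht
    have h0 : (0:ℝ) < 1 + t ^ 2 := by positivity
    have hp : 0 < Real.sqrt (1 + t ^ 2) := Real.sqrt_pos.2 h0
    constructor
    · positivity
    · rw [div_lt_one hp]
      exact (Real.lt_sqrt (le_of_lt ht)).2 (by linarith)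

lemma subst_injOn :
    Set.InjOn (fun t : ℝ => t / Real.sqrt (1 + t ^ 2)) (Set.Ioi 0) := by
  intro x _ y _ h
  have h' : x / Real.sqrt (1 + x ^ 2) = y / Real.sqrt (1 + y ^ 2) := h
  have hx := subst_inv x
  rw [h', subst_inv y] at hx
  exact hx.symm


lemma sym_image {a : ℝ} (ha : 0 < a) :
    Set.Ioi ((Real.sqrt a)⁻¹) = (fun t : ℝ => (a * t)⁻¹) '' Set.Ioo 0 (Real.sqrt a)⁻¹ := by
  have hsa : 0 < Real.sqrt a := Real.sqrt_pos.2 ha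
  have hsaa : Real.sqrt a * Real.sqrt a = a := Real.mul_self_sqrt ha.le
  ext u
  constructor
  · intro hu
    have hu' : (Real.sqrt a)⁻¹ < u := hu
    have hu0 : 0 < u := lt_trans (by positivity) hu'
    refine ⟨(a * u)⁻¹, ⟨by positivity, ?_⟩, ?_⟩
    · rw [inv_lt_inv₀ (by positivity) (by positivity)]
      calc Real.sqrt a = a * (Real.sqrt a)⁻¹ := by field_simp; exact Real.sq_sqrt ha.le
        _ < a * u := by exact mul_lt_mul_of_pos_left hu' ha
    · field_simp
  · rintro ⟨t, ⟨ht0, htX⟩, rfl⟩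
    rw [Set.mem_Ioi, inv_lt_inv₀ (by positivity) (by positivity)] at *
    calc a * t < a * (Real.sqrt a)⁻¹ := mul_lt_mul_of_pos_left htX ha
      _ = Real.sqrt a := by field_simp; exact (Real.sq_sqrt ha.le).symm

lemma sym_injOn {a : ℝ} (ha : 0 < a) :
    Set.InjOn (fun t : ℝ => (a * t)⁻¹) (Set.Ioo 0 (Real.sqrt a)⁻¹) := by
  intro x hx y hy h
  have h' : (a * x)⁻¹ = (a * y)⁻¹ := h
  have hx0 : 0 < x := hx.1
  have hy0 : 0 < y := hy.1
  field_simp at h'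
  exact h'.symm

lemma sym_hasDeriv {a : ℝ} (ha : 0 < a) (t : ℝ) (ht : 0 < t) :
    HasDerivAt (fun t : ℝ => (a * t)⁻¹) (-(a * t ^ 2)⁻¹) t := by
  have := ((hasDerivAt_id t).const_mul a).inv (by positivity : a * t ≠ 0)
  refine this.congr_deriv ?_
  field_simp
  simp [ht.ne']

lemma sym_integral {a : ℝ} (ha : 0 < a) :
    ∫ t in Set.Ioi ((Real.sqrt a)⁻¹), G a t
      = ∫ t in Set.Ioo (0:ℝ) (Real.sqrt a)⁻¹, G a t := by
  rw [sym_image ha,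
    MeasureTheory.integral_image_eq_integral_abs_deriv_smul measurableSet_Ioo
      (fun t ht => (sym_hasDeriv ha t ht.1).hasDerivWithinAt) (sym_injOn ha)]
  apply MeasureTheory.setIntegral_congr_fun measurableSet_Ioo
  intro t ht
  have ht0 : 0 < t := ht.1
  have h1 : 1 + ((a * t)⁻¹) ^ 2 = (1 + a ^ 2 * t ^ 2) / (a * t) ^ 2 := by
    field_simp; ring
  have h2 : 1 + a ^ 2 * ((a * t)⁻¹) ^ 2 = (1 + t ^ 2) / t ^ 2 := by
    field_simp; ring
  have hA : (0:ℝ) < 1 + a ^ 2 * t ^ 2 := by positivity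
  have hT : (0:ℝ) < 1 + t ^ 2 := by positivity
  simp only [smul_eq_mul, G]
  rw [h1, h2, Real.sqrt_div hA.le, Real.sqrt_div hT.le,
    Real.sqrt_sq (by positivity : (0:ℝ) ≤ a * t), Real.sqrt_sq ht0.le,
    abs_neg, abs_of_pos (by positivity : (0:ℝ) < (a * t ^ 2)⁻¹)]
  have hsA : 0 < Real.sqrt (1 + a ^ 2 * t ^ 2) := Real.sqrt_pos.2 hA
  have hsT : 0 < Real.sqrt (1 + t ^ 2) := Real.sqrt_pos.2 hT
  field_simp


lemma G_cont (a : ℝ) : Continuous (G a) := by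
  apply Continuous.div continuous_one
  · exact (Real.continuous_sqrt.comp (by continuity)).mul
      (Real.continuous_sqrt.comp (by continuity))
  · intro t
    have h1 : 0 < Real.sqrt (1 + t ^ 2) := Real.sqrt_pos.2 (by positivity)
    have h2 : 0 < Real.sqrt (1 + a ^ 2 * t ^ 2) := Real.sqrt_pos.2 (by positivity)
    positivity

lemma G_pos {a : ℝ} (t : ℝ) : 0 < G a t := by
  have h1 : 0 < Real.sqrt (1 + t ^ 2) := Real.sqrt_pos.2 (by positivity)
  have h2 : 0 < Real.sqrt (1 + a ^ 2 * t ^ 2) := Real.sqrt_pos.2 (by positivity)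
  unfold G; positivity

lemma G_integrableOn_Ioi {a X : ℝ} (ha : 0 < a) (hX : 0 < X) :
    IntegrableOn (G a) (Set.Ioi X) := by
  have hbase : IntegrableOn (fun t : ℝ => a⁻¹ * t ^ (-2:ℝ)) (Set.Ioi X) :=
    (integrableOn_Ioi_rpow_of_lt (by norm_num) hX).const_mul a⁻¹
  refine hbase.mono' ((G_cont a).aestronglyMeasurable.restrict) ?_
  filter_upwards [ae_restrict_mem measurableSet_Ioi] with t ht
  have ht0 : 0 < t := lt_trans hX ht
  have h1 : t ≤ Real.sqrt (1 + t ^ 2) := by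
    nlinarith [Real.sq_sqrt (by positivity : (0:ℝ) ≤ 1 + t ^ 2),
      Real.sqrt_nonneg (1 + t ^ 2)]
  have h2 : a * t ≤ Real.sqrt (1 + a ^ 2 * t ^ 2) := by
    nlinarith [Real.sq_sqrt (by positivity : (0:ℝ) ≤ 1 + a ^ 2 * t ^ 2),
      Real.sqrt_nonneg (1 + a ^ 2 * t ^ 2)]
  have hrp : t ^ (-2:ℝ) = (t ^ 2)⁻¹ := by
    rw [show (-2:ℝ) = -((2:ℕ):ℝ) by norm_num, Real.rpow_neg ht0.le,
      Real.rpow_natCast]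
  rw [Real.norm_eq_abs, abs_of_pos (G_pos t), hrp]
  have hprod : 0 < t * (a * t) := by positivity
  calc G a t ≤ 1 / (t * (a * t)) := by
        apply one_div_le_one_div_of_le hprod
        exact mul_le_mul h1 h2 (by positivity) (Real.sqrt_nonneg _)
    _ = a⁻¹ * (t ^ 2)⁻¹ := by field_simp

lemma G_integrableOn_Ioo {a X : ℝ} : IntegrableOn (G a) (Set.Ioo 0 X) :=
  ((G_cont a).integrableOn_Icc).mono_set Set.Ioo_subset_Icc_self

lemma G_split {a : ℝ} (ha : 0 < a) :
    ∫ t in Set.Ioi (0:ℝ), G a t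
      = 2 * ∫ t in Set.Ioo (0:ℝ) (Real.sqrt a)⁻¹, G a t := by
  have hX : (0:ℝ) < (Real.sqrt a)⁻¹ := by
    have := Real.sqrt_pos.2 ha; positivity
  have hdisj : Disjoint (Set.Ioo (0:ℝ) (Real.sqrt a)⁻¹) (Set.Ici (Real.sqrt a)⁻¹) :=
    Set.disjoint_left.2 fun x hx hx' => absurd hx.2 (not_lt.2 hx')
  rw [← Set.Ioo_union_Ici_eq_Ioi hX,
    MeasureTheory.setIntegral_union hdisj measurableSet_Ici G_integrableOn_Ioo
      ((integrableOn_Ici_iff_integrableOn_Ioi (by simp)).2 (G_integrableOn_Ioi ha hX)),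
    MeasureTheory.integral_Ici_eq_integral_Ioi, sym_integral ha]
  ring

lemma cont_inv_sqrt : Continuous (fun t : ℝ => (Real.sqrt (1 + t ^ 2))⁻¹) := by
  apply Continuous.inv₀ (Real.continuous_sqrt.comp (by continuity))
  intro t
  exact (Real.sqrt_pos.2 (by positivity)).ne'

lemma int_Ioo_arsinh {X : ℝ} (hX : 0 ≤ X) :
    ∫ t in Set.Ioo (0:ℝ) X, (Real.sqrt (1 + t ^ 2))⁻¹ = Real.arsinh X := by
  rw [← MeasureTheory.integral_Ioc_eq_integral_Ioo, ← intervalIntegral.integral_of_le hX]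
  rw [intervalIntegral.integral_eq_sub_of_hasDerivAt
    (fun x _ => Real.hasDerivAt_arsinh x) (cont_inv_sqrt.intervalIntegrable 0 X)]
  rw [Real.arsinh_zero, sub_zero]

lemma G_upper {a : ℝ} (ha : 0 < a) :
    ∫ t in Set.Ioo (0:ℝ) (Real.sqrt a)⁻¹, G a t ≤ Real.arsinh (Real.sqrt a)⁻¹ := by
  have hX : (0:ℝ) ≤ (Real.sqrt a)⁻¹ := by positivity
  rw [← int_Ioo_arsinh hX]
  apply MeasureTheory.setIntegral_mono_on G_integrableOn_Ioo
    ((cont_inv_sqrt.integrableOn_Icc).mono_set Set.Ioo_subset_Icc_self)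
    measurableSet_Ioo
  intro t _
  have h2 : (1:ℝ) ≤ Real.sqrt (1 + a ^ 2 * t ^ 2) := by
    have h := Real.sqrt_le_sqrt (show (1:ℝ) ≤ 1 + a ^ 2 * t ^ 2 by
      nlinarith [mul_nonneg (sq_nonneg a) (sq_nonneg t)])
    simpa using h
  have hS : 0 < Real.sqrt (1 + t ^ 2) := Real.sqrt_pos.2 (by positivity)
  rw [G, one_div, mul_inv]
  have := mul_le_mul_of_nonneg_left (inv_le_one_of_one_le₀ h2)
    (by positivity : (0:ℝ) ≤ (Real.sqrt (1 + t ^ 2))⁻¹)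
  simpa using this

lemma G_lower {a : ℝ} (ha : 0 < a) :
    Real.arsinh (Real.sqrt a)⁻¹ / Real.sqrt (1 + a)
      ≤ ∫ t in Set.Ioo (0:ℝ) (Real.sqrt a)⁻¹, G a t := by
  have hX : (0:ℝ) ≤ (Real.sqrt a)⁻¹ := by positivity
  have hsa : 0 < Real.sqrt (1 + a) := Real.sqrt_pos.2 (by positivity)
  rw [div_eq_mul_inv, mul_comm, ← int_Ioo_arsinh hX, ← MeasureTheory.integral_const_mul]
  apply MeasureTheory.setIntegral_mono_on
    ((((continuous_const.mul cont_inv_sqrt)).integrableOn_Icc).mono_set Set.Ioo_subset_Icc_self)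
    G_integrableOn_Ioo measurableSet_Ioo
  intro t ht
  have ht0 : 0 < t := ht.1
  have ht2 : t ^ 2 ≤ a⁻¹ := by
    have h2' : t ^ 2 < ((Real.sqrt a)⁻¹) ^ 2 := by
      apply pow_lt_pow_left₀ ht.2 ht0.le (by norm_num)
    rw [inv_pow, Real.sq_sqrt ha.le] at h2'
    exact h2'.le
  have h2 : Real.sqrt (1 + a ^ 2 * t ^ 2) ≤ Real.sqrt (1 + a) := by
    apply Real.sqrt_le_sqrt
    have : a ^ 2 * t ^ 2 ≤ a ^ 2 * a⁻¹ := by nlinarith [sq_nonneg a]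
    have ha2 : a ^ 2 * a⁻¹ = a := by field_simp
    linarith
  have hS : 0 < Real.sqrt (1 + t ^ 2) := Real.sqrt_pos.2 (by positivity)
  have hS2 : 0 < Real.sqrt (1 + a ^ 2 * t ^ 2) := Real.sqrt_pos.2 (by positivity)
  rw [G, one_div, mul_inv]
  show (Real.sqrt (1 + a))⁻¹ * (Real.sqrt (1 + t ^ 2))⁻¹ ≤ _
  rw [mul_comm ((Real.sqrt (1 + a))⁻¹)]
  exact mul_le_mul_of_nonneg_left (inv_anti₀ hS2 h2) (by positivity)


noncomputable def La (a : ℝ) : ℝ := Real.arsinh (Real.sqrt a)⁻¹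
noncomputable def ca (a : ℝ) : ℝ := Real.sqrt (2 * (2 - a ^ 2))
noncomputable def phi1 (a : ℝ) : ℝ :=
  ca a / Real.sqrt (1 + a) * (2 * La a) + 2 * Real.log a
noncomputable def phi2 (a : ℝ) : ℝ := 4 * La a + 2 * Real.log a

lemma La_eq {a : ℝ} (ha : 0 < a) :
    La a = Real.log (1 + Real.sqrt (1 + a)) - Real.log a / 2 := by
  have hsa : 0 < Real.sqrt a := Real.sqrt_pos.2 ha
  have h1 : 1 + ((Real.sqrt a)⁻¹) ^ 2 = (1 + a) / a := by
    rw [inv_pow, Real.sq_sqrt ha.le]; field_simp; ring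
  have h2 : Real.sqrt ((1 + a) / a) = Real.sqrt (1 + a) / Real.sqrt a :=
    Real.sqrt_div (by positivity) a
  have h3 : (Real.sqrt a)⁻¹ + Real.sqrt (1 + a) / Real.sqrt a
      = (1 + Real.sqrt (1 + a)) / Real.sqrt a := by field_simp
  rw [La, Real.arsinh, h1, h2, h3,
    Real.log_div (by positivity) hsa.ne', Real.log_sqrt ha.le]

lemma phi2_eq {a : ℝ} (ha : 0 < a) :
    phi2 a = 4 * Real.log (1 + Real.sqrt (1 + a)) := by
  rw [phi2, La_eq ha]; ring

lemma tendsto_phi2 :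
    Tendsto phi2 (nhdsWithin 0 (Set.Ioo (0:ℝ) 1)) (nhds (Real.log 16)) := by
  have hlog : Real.log 16 = 4 * Real.log 2 := by
    rw [show (16:ℝ) = 2 ^ 4 by norm_num, Real.log_pow]; norm_num
  have hcont : Tendsto (fun a : ℝ => 4 * Real.log (1 + Real.sqrt (1 + a)))
      (nhds 0) (nhds (4 * Real.log 2)) := by
    have : ContinuousAt (fun a : ℝ => 4 * Real.log (1 + Real.sqrt (1 + a))) 0 := by
      apply ContinuousAt.mul continuousAt_const
      apply Real.continuousAt_log (by norm_num)
        |>.comp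
      fun_prop
    have ht := this.tendsto
    norm_num at ht
    exact ht
  rw [hlog]
  apply Tendsto.congr' _ (hcont.mono_left nhdsWithin_le_nhds)
  filter_upwards [self_mem_nhdsWithin] with a ha
  exact (phi2_eq ha.1).symm

noncomputable def psi (a : ℝ) : ℝ :=
  2 * (2 + a) * a / (Real.sqrt (1 + a) * (2 * Real.sqrt (1 + a) + ca a))

lemma ca_zero : ca 0 = 2 := by
  rw [ca, show (2:ℝ) * (2 - 0 ^ 2) = 2 ^ 2 by norm_num, Real.sqrt_sq (by norm_num)]

lemma ca_continuous : Continuous ca :=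
  Real.continuous_sqrt.comp (by continuity)

lemma phi1_eq {a : ℝ} (ha : 0 < a) (ha1 : a < 1) :
    phi1 a = ca a / Real.sqrt (1 + a) * (2 * Real.log (1 + Real.sqrt (1 + a)))
      + psi a * Real.log a := by
  have hs : 0 < Real.sqrt (1 + a) := Real.sqrt_pos.2 (by linarith)
  have hc : 0 ≤ ca a := Real.sqrt_nonneg _
  have hs2 : Real.sqrt (1 + a) ^ 2 = 1 + a := Real.sq_sqrt (by linarith)
  have hc2 : ca a ^ 2 = 2 * (2 - a ^ 2) := Real.sq_sqrt (by nlinarith)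
  have hden : 0 < Real.sqrt (1 + a) * (2 * Real.sqrt (1 + a) + ca a) := by
    have : 0 < 2 * Real.sqrt (1 + a) + ca a := by linarith
    positivity
  have key : 2 - ca a / Real.sqrt (1 + a) = psi a := by
    rw [psi, eq_div_iff hden.ne']
    field_simp
    linear_combination 4 * hs2 - hc2
  have expand : phi1 a
      = ca a / Real.sqrt (1 + a) * (2 * Real.log (1 + Real.sqrt (1 + a)))
        + (2 - ca a / Real.sqrt (1 + a)) * Real.log a := by
    rw [phi1, La_eq ha]; ring
  rw [expand, key]

lemma tendsto_phi1 :
    Tendsto phi1 (nhdsWithin 0 (Set.Ioo (0:ℝ) 1)) (nhds (Real.log 16)) := by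
  have hlog : Real.log 16 = 4 * Real.log 2 := by
    rw [show (16:ℝ) = 2 ^ 4 by norm_num, Real.log_pow]; norm_num
  have T1 : Tendsto (fun a : ℝ => ca a / Real.sqrt (1 + a)
      * (2 * Real.log (1 + Real.sqrt (1 + a)))) (nhds 0) (nhds (4 * Real.log 2)) := by
    have hcont : ContinuousAt (fun a : ℝ => ca a / Real.sqrt (1 + a)
        * (2 * Real.log (1 + Real.sqrt (1 + a)))) 0 := by
      apply ContinuousAt.mul
      · apply ContinuousAt.div ca_continuous.continuousAt
          (Real.continuous_sqrt.comp (by continuity)).continuousAt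
        norm_num
      · apply ContinuousAt.mul continuousAt_const
        apply (Real.continuousAt_log (by norm_num)).comp
        fun_prop
    have ht := hcont.tendsto
    norm_num [ca_zero] at ht
    convert ht using 2
    ring
  have halog : Tendsto (fun a : ℝ => Real.log a * a)
      (nhdsWithin 0 (Set.Ioo (0:ℝ) 1)) (nhds 0) := by
    have := tendsto_log_mul_rpow_nhdsGT_zero one_pos
    have h2 := this.congr (fun x => by rw [Real.rpow_one])
    exact h2.mono_left (nhdsWithin_mono 0 Set.Ioo_subset_Ioi_self)
  have hpsi0 : (fun a : ℝ => 2 * (2 + a) / (Real.sqrt (1 + a)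
      * (2 * Real.sqrt (1 + a) + ca a))) 0 = 1 := by
    norm_num [ca_zero]
  have Tpsi : Tendsto (fun a : ℝ => 2 * (2 + a) / (Real.sqrt (1 + a)
      * (2 * Real.sqrt (1 + a) + ca a))) (nhds 0) (nhds 1) := by
    have hcont : ContinuousAt (fun a : ℝ => 2 * (2 + a) / (Real.sqrt (1 + a)
        * (2 * Real.sqrt (1 + a) + ca a))) 0 := by
      apply ContinuousAt.div (by fun_prop)
      · exact ((Real.continuous_sqrt.comp (by continuity)).mul
          (((continuous_const.mul (Real.continuous_sqrt.comp (by continuity))).add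
            ca_continuous))).continuousAt
      · norm_num [ca_zero]
    have ht := hcont.tendsto
    norm_num [ca_zero] at ht
    exact ht
  have T2 : Tendsto (fun a : ℝ => psi a * Real.log a)
      (nhdsWithin 0 (Set.Ioo (0:ℝ) 1)) (nhds 0) := by
    have heq : ∀ a : ℝ, psi a * Real.log a
        = (2 * (2 + a) / (Real.sqrt (1 + a) * (2 * Real.sqrt (1 + a) + ca a)))
          * (Real.log a * a) := by
      intro a; rw [psi]; ring
    have hm := ((Tpsi.mono_left nhdsWithin_le_nhds)).mul halog
    rw [one_mul] at hm
    exact Tendsto.congr (fun a => (heq a).symm) hm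
  have := (T1.mono_left nhdsWithin_le_nhds).add T2
  rw [add_zero] at this
  rw [hlog]
  apply Tendsto.congr' _ this
  filter_upwards [self_mem_nhdsWithin] with a ha
  exact (phi1_eq ha.1 ha.2).symm


lemma Kint_eq {k : ℝ} (hk0 : 0 ≤ k) (hk1 : k < 1) :
    Kint k = ∫ t in Set.Ioi (0:ℝ), G (Real.sqrt (1 - k ^ 2)) t := by
  set a := Real.sqrt (1 - k ^ 2) with ha
  have ha2 : a ^ 2 = 1 - k ^ 2 := Real.sq_sqrt (by nlinarith)
  rw [Kint, intervalIntegral.integral_of_le zero_le_one,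
    MeasureTheory.integral_Ioc_eq_integral_Ioo, subst_image,
    MeasureTheory.integral_image_eq_integral_abs_deriv_smul measurableSet_Ioi
      (fun t _ => (hasDerivAt_subst t).hasDerivWithinAt) subst_injOn]
  apply MeasureTheory.setIntegral_congr_fun measurableSet_Ioi
  intro t _
  have h0 : (0:ℝ) < 1 + t ^ 2 := by positivity
  have hS : 0 < Real.sqrt (1 + t ^ 2) := Real.sqrt_pos.2 h0
  have hsq : Real.sqrt (1 + t ^ 2) ^ 2 = 1 + t ^ 2 := Real.sq_sqrt h0.le
  have e1 : 1 - (t / Real.sqrt (1 + t ^ 2)) ^ 2 = (1 + t ^ 2)⁻¹ := by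
    rw [div_pow, hsq]; field_simp; ring
  have e2 : 1 - k ^ 2 * (t / Real.sqrt (1 + t ^ 2)) ^ 2
      = (1 + a ^ 2 * t ^ 2) / (1 + t ^ 2) := by
    rw [div_pow, hsq, ha2]; field_simp; ring
  have e3 : (1 + t ^ 2)⁻¹ * ((1 + a ^ 2 * t ^ 2) / (1 + t ^ 2))
      = (1 + a ^ 2 * t ^ 2) / (1 + t ^ 2) ^ 2 := by rw [inv_mul_eq_div, div_div]; ring
  have hA : (0:ℝ) < 1 + a ^ 2 * t ^ 2 := by positivity
  have hSA : 0 < Real.sqrt (1 + a ^ 2 * t ^ 2) := Real.sqrt_pos.2 hA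
  simp only [smul_eq_mul]
  rw [e1, e2, e3, Real.sqrt_div hA.le, Real.sqrt_sq h0.le,
    abs_of_pos (by positivity : (0:ℝ) < 1 / ((1 + t ^ 2) * Real.sqrt (1 + t ^ 2))), G]
  rw [one_div_div]
  field_simp

lemma Kint_bounds {k : ℝ} (hk0 : 0 ≤ k) (hk1 : k < 1) :
    2 * La (Real.sqrt (1 - k ^ 2)) / Real.sqrt (1 + Real.sqrt (1 - k ^ 2)) ≤ Kint k
      ∧ Kint k ≤ 2 * La (Real.sqrt (1 - k ^ 2)) := by
  set a := Real.sqrt (1 - k ^ 2) with hadef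
  have ha : 0 < a := Real.sqrt_pos.2 (by nlinarith)
  have heq : Kint k = 2 * ∫ t in Set.Ioo (0:ℝ) (Real.sqrt a)⁻¹, G a t :=
    (Kint_eq hk0 hk1).trans (G_split ha)
  have hLa : La a = Real.arsinh (Real.sqrt a)⁻¹ := rfl
  constructor
  · rw [heq]
    have hl := G_lower ha
    rw [← hLa] at hl
    calc 2 * La a / Real.sqrt (1 + a) = 2 * (La a / Real.sqrt (1 + a)) := by ring
      _ ≤ 2 * ∫ t in Set.Ioo (0:ℝ) (Real.sqrt a)⁻¹, G a t := by linarith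
  · rw [heq]
    have hu := G_upper ha
    rw [← hLa] at hu
    linarith

theorem stmt7 (n : ℕ) (hn : 0 < n) (k : ℝ → ℝ)
    (hk : ∀ ε ∈ Set.Ioo (0:ℝ) (1 / (n * Real.pi)),
      k ε ∈ Set.Ioo (0:ℝ) 1 ∧
      Real.sqrt (1 + (k ε) ^ 2) * Kint (k ε) = 1 / (2 * n * ε)) :
    Filter.Tendsto
      (fun ε : ℝ => (1 - (k ε) ^ 2) * Real.exp (1 / (Real.sqrt 2 * n * ε)))
      (nhdsWithin 0 (Set.Ioo (0:ℝ) (1 / (n * Real.pi))))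
      (nhds 16) := by
  set S := Set.Ioo (0:ℝ) (1 / (n * Real.pi)) with hSdef
  set F := nhdsWithin (0:ℝ) S with hFdef
  have hn' : (0:ℝ) < n := by exact_mod_cast hn
  set A : ℝ → ℝ := fun ε => Real.sqrt (1 - k ε ^ 2) with hAdef
  set H : ℝ → ℝ := fun ε => 1 / (Real.sqrt 2 * n * ε) + Real.log (1 - k ε ^ 2) with hHdef
  have h2 : Real.sqrt 2 * Real.sqrt 2 = 2 := Real.mul_self_sqrt (by norm_num)
  have hs2pos : 0 < Real.sqrt 2 := Real.sqrt_pos.2 (by norm_num)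
  -- basic properties on S
  have hprop : ∀ ε ∈ S, 0 < A ε ∧ A ε < 1 ∧ A ε ^ 2 = 1 - k ε ^ 2
      ∧ 0 < k ε ∧ k ε < 1 := by
    intro ε hε
    obtain ⟨⟨hk0, hk1⟩, _⟩ := hk ε hε
    have hpos : (0:ℝ) < 1 - k ε ^ 2 := by nlinarith
    have ha2 : A ε ^ 2 = 1 - k ε ^ 2 := Real.sq_sqrt hpos.le
    have ha0 : 0 < A ε := Real.sqrt_pos.2 hpos
    have ha1 : A ε < 1 := by nlinarith
    exact ⟨ha0, ha1, ha2, hk0, hk1⟩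
  -- H in terms of Kint
  have hHeq : ∀ ε ∈ S, H ε = ca (A ε) * Kint (k ε) + 2 * Real.log (A ε) := by
    intro ε hε
    obtain ⟨ha0, ha1, ha2, hk0, hk1⟩ := hprop ε hε
    obtain ⟨_, heqn⟩ := hk ε hε
    have hε0 : 0 < ε := hε.1
    have hca : ca (A ε) = Real.sqrt 2 * Real.sqrt (1 + k ε ^ 2) := by
      rw [ca, ha2, show (2:ℝ) * (2 - (1 - k ε ^ 2)) = 2 * (1 + k ε ^ 2) by ring,
        Real.sqrt_mul (by norm_num : (0:ℝ) ≤ 2)]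
    have hE : 1 / (Real.sqrt 2 * n * ε) = Real.sqrt 2 * (1 / (2 * n * ε)) := by
      rw [mul_one_div, div_eq_div_iff (by positivity) (by positivity)]
      calc (1:ℝ) * (2 * n * ε) = (Real.sqrt 2 * Real.sqrt 2) * n * ε := by rw [h2]; ring
        _ = Real.sqrt 2 * (Real.sqrt 2 * n * ε) := by ring
    have hlog : Real.log (1 - k ε ^ 2) = 2 * Real.log (A ε) := by
      rw [← ha2, show A ε ^ 2 = A ε ^ (2:ℕ) by norm_num, Real.log_pow]
      norm_num
    rw [hHdef]
    simp only
    rw [hE, ← heqn, hlog, hca]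
    ring
  -- squeeze inequalities
  have key1 : ∀ ε ∈ S, phi1 (A ε) ≤ H ε ∧ H ε ≤ phi2 (A ε) := by
    intro ε hε
    obtain ⟨ha0, ha1, ha2, hk0, hk1⟩ := hprop ε hε
    have hb := Kint_bounds hk0.le hk1
    have hbl : 2 * La (A ε) / Real.sqrt (1 + A ε) ≤ Kint (k ε) := hb.1
    have hbu : Kint (k ε) ≤ 2 * La (A ε) := hb.2
    have hca0 : 0 ≤ ca (A ε) := Real.sqrt_nonneg _
    have hca2 : ca (A ε) ≤ 2 := by
      rw [ca]
      calc Real.sqrt (2 * (2 - A ε ^ 2)) ≤ Real.sqrt (2 ^ 2) :=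
            Real.sqrt_le_sqrt (by nlinarith)
        _ = 2 := Real.sqrt_sq (by norm_num)
    have hLa0 : 0 ≤ La (A ε) := Real.arsinh_nonneg_iff.2 (by positivity)
    have hspos : 0 < Real.sqrt (1 + A ε) := Real.sqrt_pos.2 (by linarith)
    have hK0 : 0 ≤ Kint (k ε) := le_trans (by positivity) hbl
    rw [hHeq ε hε]
    constructor
    · rw [phi1]
      have := mul_le_mul_of_nonneg_left hbl hca0
      calc ca (A ε) / Real.sqrt (1 + A ε) * (2 * La (A ε)) + 2 * Real.log (A ε)
          = ca (A ε) * (2 * La (A ε) / Real.sqrt (1 + A ε)) + 2 * Real.log (A ε) := by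
            ring
        _ ≤ ca (A ε) * Kint (k ε) + 2 * Real.log (A ε) := by linarith
    · rw [phi2]
      have h1 : ca (A ε) * Kint (k ε) ≤ 2 * Kint (k ε) :=
        mul_le_mul_of_nonneg_right hca2 hK0
      have h2' : 2 * Kint (k ε) ≤ 2 * (2 * La (A ε)) := by linarith
      linarith
  -- A tends to 0 within Ioo 0 1
  have key2 : Tendsto A F (nhdsWithin 0 (Set.Ioo (0:ℝ) 1)) := by
    rw [tendsto_nhdsWithin_iff]
    constructor
    · rw [tendsto_order]
      constructor
      · intro δ hδ
        filter_upwards [self_mem_nhdsWithin] with ε hε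
        exact lt_trans hδ (hprop ε hε).1
      · intro δ hδ
        rcases le_or_gt 1 δ with h1δ | h1δ
        · filter_upwards [self_mem_nhdsWithin] with ε hε
          exact lt_of_lt_of_le (hprop ε hε).2.1 h1δ
        · have hLδ : 0 < La δ := by
            rw [show La δ = Real.arsinh (Real.sqrt δ)⁻¹ from rfl,
              Real.arsinh_pos_iff]
            have := Real.sqrt_pos.2 hδ
            positivity
          set M : ℝ := Real.sqrt 2 * (2 * La δ) with hMdef
          have hM : 0 < M := by positivity
          have hε₀ : 0 < 1 / (2 * n * M) := by positivity
          filter_upwards [(eventually_lt_nhds hε₀).filter_mono nhdsWithin_le_nhds,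
            self_mem_nhdsWithin] with ε hεsmall hε
          by_contra hge
          push_neg at hge
          obtain ⟨ha0, ha1, ha2, hk0, hk1⟩ := hprop ε hε
          obtain ⟨_, heqn⟩ := hk ε hε
          have hε0 : 0 < ε := hε.1
          -- La antitone
          have hLale : La (A ε) ≤ La δ := by
            rw [show La (A ε) = Real.arsinh (Real.sqrt (A ε))⁻¹ from rfl,
              show La δ = Real.arsinh (Real.sqrt δ)⁻¹ from rfl,
              Real.arsinh_le_arsinh]
            have h1 : Real.sqrt δ ≤ Real.sqrt (A ε) := Real.sqrt_le_sqrt hge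
            have h2'' : 0 < Real.sqrt δ := Real.sqrt_pos.2 hδ
            exact inv_anti₀ h2'' h1
          have hb := Kint_bounds hk0.le hk1
          have hLa0 : 0 ≤ La (A ε) := Real.arsinh_nonneg_iff.2 (by positivity)
          have hspos : 0 < Real.sqrt (1 + A ε) := Real.sqrt_pos.2 (by linarith)
          have hK0 : 0 ≤ Kint (k ε) := le_trans (by positivity) hb.1
          have hKu : Kint (k ε) ≤ 2 * La δ := le_trans hb.2 (by linarith)
          have hsq : Real.sqrt (1 + k ε ^ 2) ≤ Real.sqrt 2 := by
            apply Real.sqrt_le_sqrt; nlinarith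
          have hbig : 1 / (2 * n * ε) ≤ M := by
            rw [← heqn, hMdef]
            exact mul_le_mul hsq hKu hK0 (Real.sqrt_nonneg 2)
          have : 1 / (2 * n * M) ≤ ε := by
            rw [div_le_iff₀ (by positivity)]
            rw [div_le_iff₀ (by positivity)] at hbig
            calc (1:ℝ) ≤ M * (2 * n * ε) := hbig
              _ = ε * (2 * ↑n * M) := by ring
          linarith
    · filter_upwards [self_mem_nhdsWithin] with ε hε
      exact ⟨(hprop ε hε).1, (hprop ε hε).2.1⟩
  -- squeeze
  have key3 : Tendsto H F (nhds (Real.log 16)) := by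
    apply tendsto_of_tendsto_of_tendsto_of_le_of_le' (tendsto_phi1.comp key2)
      (tendsto_phi2.comp key2)
    · filter_upwards [self_mem_nhdsWithin] with ε hε
      exact (key1 ε hε).1
    · filter_upwards [self_mem_nhdsWithin] with ε hε
      exact (key1 ε hε).2
  have hexp : Tendsto (fun ε => Real.exp (H ε)) F (nhds (Real.exp (Real.log 16))) :=
    (Real.continuous_exp.continuousAt.tendsto).comp key3
  rw [Real.exp_log (by norm_num : (0:ℝ) < 16)] at hexp
  apply hexp.congr'
  filter_upwards [self_mem_nhdsWithin] with ε hε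
  obtain ⟨⟨hk0, hk1⟩, _⟩ := hk ε hε
  have hpos : (0:ℝ) < 1 - k ε ^ 2 := by nlinarith
  rw [hHdef]
  simp only
  rw [Real.exp_add, Real.exp_log hpos]
  ring
end

section
/- Let γ, δ > 0 and let a, b be real numbers with b > 0 and δ·a > b. Set Q := 2(δ+2) − 3δa, D := Q² + 24(δ+2)b, τ_* := 2(δ+2)γ/(√D − Q), and m := (√D − Q)/2 − 3b. Then √D − Q > 0 and m > 0, so τ_* > 0 and μ_* := √m > 0 are well defined; the purely imaginary number iμ_* satisfies g(iμ_*, τ_*) = 0; and, conversely, for every τ > 0 and μ ∈ ℝ with g(iμ, τ) = 0, one has μ ≠ 0, τ = τ_*, and μ = ±μ_*. In particular, τ_* is the unique value of τ > 0 for which the cubic g(·,τ) has a purely imaginary root. -/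
open Real Complex

private lemma stmt10_key (γ δ a b τ μ : ℝ) :
    (((τ / γ : ℝ) : ℂ) * (Complex.I * μ) ^ 3 + ((2 * τ / γ + 1 : ℝ) : ℂ) * (Complex.I * μ) ^ 2 +
      ((δ + 2 - 3 * (τ / γ) * b : ℝ) : ℂ) * (Complex.I * μ) + ((3 * δ * a - 3 * b : ℝ) : ℂ)) = 0 ↔
    (-(2 * τ / γ + 1) * μ ^ 2 + (3 * δ * a - 3 * b) = 0 ∧
      -(τ / γ) * μ ^ 3 + (δ + 2 - 3 * (τ / γ) * b) * μ = 0) := by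
  rw [Complex.ext_iff]
  simp only [Complex.add_re, Complex.add_im, Complex.mul_re, Complex.mul_im, Complex.I_re,
    Complex.I_im, Complex.ofReal_re, Complex.ofReal_im, Complex.zero_re, Complex.zero_im,
    pow_succ, pow_zero, one_mul]
  constructor <;> rintro ⟨h1, h2⟩ <;> exact ⟨by nlinarith, by nlinarith⟩

set_option maxHeartbeats 1600000 in
theorem stmt10 (γ δ a b : ℝ) (hγ : 0 < γ) (hδ : 0 < δ) (hb : 0 < b) (hab : b < δ * a)
    (g : ℂ → ℝ → ℂ)
    (hg : ∀ (lam : ℂ) (τ : ℝ), g lam τ =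
      ((τ / γ : ℝ) : ℂ) * lam ^ 3 + ((2 * τ / γ + 1 : ℝ) : ℂ) * lam ^ 2 +
      ((δ + 2 - 3 * (τ / γ) * b : ℝ) : ℂ) * lam + ((3 * δ * a - 3 * b : ℝ) : ℂ))
    (Q D τs m μs : ℝ)
    (hQ : Q = 2 * (δ + 2) - 3 * δ * a)
    (hD : D = Q ^ 2 + 24 * (δ + 2) * b)
    (hτs : τs = 2 * (δ + 2) * γ / (Real.sqrt D - Q))
    (hm : m = (Real.sqrt D - Q) / 2 - 3 * b)
    (hμs : μs = Real.sqrt m) :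
    0 < Real.sqrt D - Q ∧ 0 < m ∧ 0 < τs ∧ 0 < μs ∧
    g (Complex.I * (μs : ℂ)) τs = 0 ∧
    (∀ τ : ℝ, 0 < τ → ∀ μ : ℝ, g (Complex.I * (μ : ℂ)) τ = 0 →
      μ ≠ 0 ∧ τ = τs ∧ (μ = μs ∨ μ = -μs)) := by
  have hD0 : 0 < D := by nlinarith [sq_nonneg Q]
  have hsq : Real.sqrt D ^ 2 = D := Real.sq_sqrt hD0.le
  have hS : 0 < Real.sqrt D - Q := by
    have h1 : Q ^ 2 < D := by nlinarith
    have h2 : Real.sqrt (Q ^ 2) < Real.sqrt D := Real.sqrt_lt_sqrt (sq_nonneg Q) h1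
    rw [Real.sqrt_sq_eq_abs] at h2
    have := le_abs_self Q
    linarith
  have hDQ : -Q < Real.sqrt D := by
    have h1 : Q ^ 2 < D := by nlinarith
    have h2 : Real.sqrt (Q ^ 2) < Real.sqrt D := Real.sqrt_lt_sqrt (sq_nonneg Q) h1
    rw [Real.sqrt_sq_eq_abs] at h2
    have := neg_abs_le Q
    linarith
  have hm0 : 0 < m := by
    have h1 : (Q + 6 * b) ^ 2 < D := by nlinarith
    have h2 : Real.sqrt ((Q + 6 * b) ^ 2) < Real.sqrt D := Real.sqrt_lt_sqrt (sq_nonneg _) h1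
    rw [Real.sqrt_sq_eq_abs] at h2
    have := le_abs_self (Q + 6 * b)
    rw [hm]; linarith
  have hτs0 : 0 < τs := by
    rw [hτs]; exact div_pos (by positivity) hS
  have hμs0 : 0 < μs := by rw [hμs]; exact Real.sqrt_pos.mpr hm0
  have hμs2 : μs ^ 2 = m := by rw [hμs]; exact Real.sq_sqrt hm0.le
  have hγ' : γ ≠ 0 := hγ.ne'
  have hS' : Real.sqrt D - Q ≠ 0 := hS.ne'
  have key : ∀ τ μ : ℝ, g (Complex.I * (μ : ℂ)) τ = 0 ↔
      (-(2 * τ / γ + 1) * μ ^ 2 + (3 * δ * a - 3 * b) = 0 ∧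
        -(τ / γ) * μ ^ 3 + (δ + 2 - 3 * (τ / γ) * b) * μ = 0) := by
    intro τ μ
    rw [hg]
    exact stmt10_key γ δ a b τ μ
  -- τs / γ
  have hτγ : τs / γ = 2 * (δ + 2) / (Real.sqrt D - Q) := by
    rw [hτs]; field_simp
  have h3bm : 3 * b + m = (Real.sqrt D - Q) / 2 := by rw [hm]; ring
  have hfwd : g (Complex.I * (μs : ℂ)) τs = 0 := by
    rw [key]
    constructor
    · -- real part
      have h1 : (2 * τs / γ + 1) * m = 3 * δ * a - 3 * b := by
        rw [hm]
        have : 2 * τs / γ = 4 * (δ + 2) / (Real.sqrt D - Q) := by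
          rw [hτs]; field_simp; ring
        rw [this]
        field_simp
        nlinarith [hsq]
      rw [hμs2]; linarith
    · -- imaginary part
      have h2 : (τs / γ) * (3 * b + m) = δ + 2 := by
        rw [hτγ, h3bm]; field_simp
      have : -(τs / γ) * μs ^ 3 + (δ + 2 - 3 * (τs / γ) * b) * μs
          = μs * ((δ + 2) - (τs / γ) * (3 * b + μs ^ 2)) := by ring
      rw [this, hμs2, h2]; ring
  refine ⟨hS, hm0, hτs0, hμs0, hfwd, ?_⟩
  intro τ hτ μ hgz
  rw [key] at hgz
  obtain ⟨h1, h2⟩ := hgz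
  have hμ0 : μ ≠ 0 := by
    intro h
    rw [h] at h1
    nlinarith
  have hμ2 : 0 < μ ^ 2 := by positivity
  have hs0 : 0 < τ / γ := div_pos hτ hγ
  -- from h2: δ + 2 = (τ/γ) * (3b + μ²)
  have h2' : (τ / γ) * (3 * b + μ ^ 2) = δ + 2 := by
    have hfac : μ * ((δ + 2) - τ / γ * (3 * b + μ ^ 2)) = 0 := by linear_combination h2
    rcases mul_eq_zero.mp hfac with h | h
    · exact absurd h hμ0
    · linarith
  -- from h1: (2τ/γ + 1) μ² = 3(δa - b)
  have h1' : (2 * τ / γ + 1) * μ ^ 2 = 3 * δ * a - 3 * b := by linarith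
  -- eliminate s = τ/γ to get quadratic in x = μ²
  have hquad : μ ^ 2 * μ ^ 2 + (Q + 6 * b) * μ ^ 2 - 9 * b * (δ * a - b) = 0 := by
    rw [hQ]
    have h1'' : (2 * (τ / γ) + 1) * μ ^ 2 = 3 * δ * a - 3 * b := by
      rw [div_eq_mul_inv] at h1' ⊢; linarith [h1']
    linear_combination (3 * b + μ ^ 2) * h1'' - 2 * μ ^ 2 * h2'
  -- μ² = m
  have hxm : μ ^ 2 = m := by
    have hfac : (μ ^ 2 - m) * (μ ^ 2 + (Q + 6 * b) + m) = 0 := by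
      -- m satisfies the same quadratic
      have hmq : m * m + (Q + 6 * b) * m - 9 * b * (δ * a - b) = 0 := by
        rw [hm]; linear_combination hsq / 4 + hD / 4 - 3 * b * hQ
      linear_combination hquad - hmq
    rcases mul_eq_zero.mp hfac with h | h
    · linarith
    · exfalso
      have hQm : Q + 6 * b + m = (Real.sqrt D + Q) / 2 + 3 * b := by rw [hm]; ring
      linarith [hμ2, hDQ, hb, hQm, h]
  -- τ = τs
  have hτeq : τ = τs := by
    rw [hxm] at h2'
    rw [h3bm] at h2'
    rw [hτs, eq_div_iff hS']
    field_simp at h2'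
    linarith [h2']
  refine ⟨hμ0, hτeq, ?_⟩
  have : (μ - μs) * (μ + μs) = 0 := by linear_combination hxm - hμs2
  rcases mul_eq_zero.mp this with h | h
  · left; linarith
  · right; linarith
end

section
/- Let γ, δ > 0 and let a, b be real numbers with b > 0 and δ·a > b. Set Q := 2(δ+2) − 3δa, D := Q² + 24(δ+2)b, τ_* := 2(δ+2)γ/(√D − Q), μ_* := √((√D − Q)/2 − 3b), and define g_λ(λ,τ) := 3(τ/γ)λ² + 2(2τ/γ + 1)λ + (δ + 2 − 3(τ/γ)b) and g_τ(λ,τ) := (1/γ)λ³ + (2/γ)λ² − (3/γ)bλ (the partial derivatives of g with respect to λ and τ). Then g_λ(iμ_*, τ_*) ≠ 0, and the complex number w := −g_τ(iμ_*, τ_*)/g_λ(iμ_*, τ_*) satisfies Re(w) > 0 and Im(w) < 0. (This is the transversality condition: the pair of complex roots of g crosses the imaginary axis with positive speed at τ = τ_*.) -/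
open Real Complex

theorem stmt11 (γ δ a b : ℝ) (hγ : 0 < γ) (hδ : 0 < δ) (hb : 0 < b) (hab : b < δ * a)
    (Q D τs μs : ℝ)
    (hQ : Q = 2 * (δ + 2) - 3 * δ * a)
    (hD : D = Q ^ 2 + 24 * (δ + 2) * b)
    (hτs : τs = 2 * (δ + 2) * γ / (Real.sqrt D - Q))
    (hμs : μs = Real.sqrt ((Real.sqrt D - Q) / 2 - 3 * b))
    (gl gt2 : ℂ → ℝ → ℂ)
    (hgl : ∀ (lam : ℂ) (τ : ℝ), gl lam τ =
      3 * ((τ / γ : ℝ) : ℂ) * lam ^ 2 + 2 * ((2 * τ / γ + 1 : ℝ) : ℂ) * lam +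
      ((δ + 2 - 3 * (τ / γ) * b : ℝ) : ℂ))
    (hgt2 : ∀ (lam : ℂ) (τ : ℝ), gt2 lam τ =
      ((1 / γ : ℝ) : ℂ) * lam ^ 3 + ((2 / γ : ℝ) : ℂ) * lam ^ 2 -
      ((3 / γ * b : ℝ) : ℂ) * lam)
    (w : ℂ)
    (hw : w = -gt2 (Complex.I * (μs : ℂ)) τs / gl (Complex.I * (μs : ℂ)) τs) :
    gl (Complex.I * (μs : ℂ)) τs ≠ 0 ∧ 0 < w.re ∧ w.im < 0 := by
  have hDpos : 0 < D := by nlinarith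
  have hsq : Real.sqrt D ^ 2 = D := Real.sq_sqrt hDpos.le
  have hs0 : 0 ≤ Real.sqrt D := Real.sqrt_nonneg D
  obtain ⟨S, hS⟩ : ∃ S, Real.sqrt D - Q = S := ⟨_, rfl⟩
  rw [hS] at hτs hμs
  have hS6 : 6 * b < S := by
    rw [← hS]
    nlinarith [hsq, hs0, sq_nonneg (Real.sqrt D + Q + 6 * b)]
  have hSpos : 0 < S := by nlinarith
  have hμ2 : μs ^ 2 = S / 2 - 3 * b := by
    rw [hμs]; exact Real.sq_sqrt (by linarith)
  have hμpos : 0 < μs := by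
    rw [hμs]; exact Real.sqrt_pos.2 (by linarith)
  have hτpos : 0 < τs := by
    rw [hτs]; exact div_pos (by positivity) hSpos
  have hγ' : (γ : ℝ) ≠ 0 := ne_of_gt hγ
  have htS : τs * S = 2 * (δ + 2) * γ := by
    rw [hτs]; field_simp
  obtain ⟨g, hgdef⟩ : ∃ g', gl (Complex.I * (μs : ℂ)) τs = g' := ⟨_, rfl⟩
  obtain ⟨z, hzdef⟩ : ∃ z', -gt2 (Complex.I * (μs : ℂ)) τs = z' := ⟨_, rfl⟩
  rw [hgdef, hzdef] at hw
  rw [hgdef]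
  have hgre : γ * g.re = γ * (δ + 2) - 3 * τs * b - 3 * τs * μs ^ 2 := by
    rw [← hgdef, hgl]
    simp [mul_pow, Complex.I_sq, pow_succ, Complex.ext_iff]
    field_simp
    try ring
  have hgim : g.im = 2 * (2 * (τs / γ) + 1) * μs := by
    rw [← hgdef, hgl]
    simp [mul_pow, Complex.I_sq, pow_succ, Complex.ext_iff]
    try exact Or.inl (by ring)
  have hgim' : γ * g.im = 2 * (2 * τs + γ) * μs := by
    rw [hgim]; field_simp; try ring
  have hzre : γ * z.re = 2 * μs ^ 2 := by
    rw [← hzdef, hgt2]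
    simp [mul_pow, Complex.I_sq, pow_succ, Complex.ext_iff]
    field_simp
    try ring
  have hzim : γ * z.im = μs ^ 3 + 3 * b * μs := by
    rw [← hzdef, hgt2]
    simp [mul_pow, Complex.I_sq, pow_succ, Complex.ext_iff]
    field_simp
    try ring
  have hgimpos : 0 < g.im := by
    rw [hgim]
    have h1 : 0 < τs / γ := div_pos hτpos hγ
    positivity
  have hgne : g ≠ 0 := by
    intro h
    rw [h] at hgimpos
    simp at hgimpos
  have hN : 0 < Complex.normSq g := Complex.normSq_pos.2 hgne
  have id1 : γ ^ 2 * (z.re * g.re + z.im * g.im)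
      = 2 * μs ^ 2 * (6 * τs * b + γ * S / 2) := by
    linear_combination (γ * g.re) * hzre + (γ * g.im) * hzim + (2 * μs ^ 2) * hgre
      + (μs ^ 3 + 3 * b * μs) * hgim' + (2 * μs ^ 2 * (γ - τs)) * hμ2 - μs ^ 2 * htS
  have id2 : γ ^ 2 * S * (z.im * g.re - z.re * g.im)
      = -(γ * μs * (S - 6 * b) * ((δ + 4) * S + 8 * (δ + 2))) := by
    linear_combination (S * γ * g.re) * hzim - (S * γ * g.im) * hzre
      + (S * (μs ^ 3 + 3 * b * μs)) * hgre - (S * 2 * μs ^ 2) * hgim'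
      + (μs * S * (γ * (δ + 2) - 3 * τs * b - 3 * τs * μs ^ 2 - (3/2) * τs * S
          - 8 * τs - 4 * γ)) * hμ2
      + (μs * (3 * b * S - (3/4) * S ^ 2 - 4 * S + 24 * b)) * htS
  have hx : 0 < (δ + 4) * S + 8 * (δ + 2) := by nlinarith
  have key1 : 0 < z.re * g.re + z.im * g.im := by
    have heq : z.re * g.re + z.im * g.im
        = (γ ^ 2 * (z.re * g.re + z.im * g.im)) / γ ^ 2 := by
      field_simp
    rw [heq, id1]
    positivity
  have key2 : z.im * g.re - z.re * g.im < 0 := by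
    have heq : z.im * g.re - z.re * g.im
        = (γ ^ 2 * S * (z.im * g.re - z.re * g.im)) / (γ ^ 2 * S) := by
      field_simp
    rw [heq, id2]
    apply div_neg_of_neg_of_pos _ (by positivity)
    have h1 : 0 < γ * μs * (S - 6 * b) * ((δ + 4) * S + 8 * (δ + 2)) :=
      mul_pos (mul_pos (mul_pos hγ hμpos) (by linarith)) hx
    linarith
  refine ⟨hgne, ?_, ?_⟩
  · rw [hw, Complex.div_re, ← add_div]
    exact div_pos key1 hN
  · rw [hw, Complex.div_im, div_sub_div_same]
    exact div_neg_of_neg_of_pos key2 hN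
end

section
/- Let δ > 0, b ≥ 0, μ > 0, and let u : [0,1] → ℝ be continuous with ∫₀¹ u(x)² dx ≤ 1. Then the imaginary part of the complex number ∫₀¹ (3u(x)² − 3 − iμ)² dx − ((δ+2)/δ)·(−μ² + 2iμ − 3b)²/(μ² + 3b) equals 6μ·(1 − ∫₀¹ u(x)² dx) + 4μ·(δ+2)/δ, and in particular this complex number is nonzero. (This is the key computation showing that the critical pair of purely imaginary eigenvalues of the linearized shadow system is algebraically simple.) -/
open Real Complex

theorem stmt12 (δ b μ : ℝ) (hδ : 0 < δ) (hb : 0 ≤ b) (hμ : 0 < μ)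
    (u : ℝ → ℝ) (hu : ContinuousOn u (Set.Icc 0 1))
    (hint : ∫ x in (0:ℝ)..1, (u x) ^ 2 ≤ 1)
    (z : ℂ)
    (hz : z = (∫ x in (0:ℝ)..1, (3 * (u x : ℂ) ^ 2 - 3 - Complex.I * (μ : ℂ)) ^ 2)
        - (((δ + 2) / δ : ℝ) : ℂ) *
          (-(μ : ℂ) ^ 2 + 2 * Complex.I * (μ : ℂ) - 3 * (b : ℂ)) ^ 2
          / ((μ : ℂ) ^ 2 + 3 * (b : ℂ))) :
    z.im = 6 * μ * (1 - ∫ x in (0:ℝ)..1, (u x) ^ 2) + 4 * μ * (δ + 2) / δ ∧ z ≠ 0 := by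
  set A : ℝ := ∫ x in (0:ℝ)..1, (u x) ^ 2 with hA
  -- pointwise rewrite of the integrand
  have hpt : ∀ x : ℝ, (3 * (u x : ℂ) ^ 2 - 3 - Complex.I * (μ : ℂ)) ^ 2
      = (((3 * (u x) ^ 2 - 3) ^ 2 - μ ^ 2 : ℝ) : ℂ)
        + ((-2 * μ * (3 * (u x) ^ 2 - 3) : ℝ) : ℂ) * Complex.I := by
    intro x
    push_cast
    linear_combination (μ : ℂ) ^ 2 * Complex.I_sq
  have hu2 : IntervalIntegrable (fun x => (u x) ^ 2) MeasureTheory.volume 0 1 :=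
    (((hu.mono (by simp [Set.uIcc_of_le])).pow 2).intervalIntegrable)
  have hf : IntervalIntegrable (fun x => (3 * (u x) ^ 2 - 3) ^ 2 - μ ^ 2)
      MeasureTheory.volume 0 1 := by
    apply ContinuousOn.intervalIntegrable
    apply ContinuousOn.sub _ continuousOn_const
    apply ContinuousOn.pow
    apply ContinuousOn.sub _ continuousOn_const
    apply ContinuousOn.mul continuousOn_const
    exact (hu.mono (by simp [Set.uIcc_of_le])).pow 2
  have hg : IntervalIntegrable (fun x => -2 * μ * (3 * (u x) ^ 2 - 3))
      MeasureTheory.volume 0 1 := by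
    apply ContinuousOn.intervalIntegrable
    apply ContinuousOn.mul continuousOn_const
    apply ContinuousOn.sub _ continuousOn_const
    apply ContinuousOn.mul continuousOn_const
    exact (hu.mono (by simp [Set.uIcc_of_le])).pow 2
  have hI : (∫ x in (0:ℝ)..1, (3 * (u x : ℂ) ^ 2 - 3 - Complex.I * (μ : ℂ)) ^ 2)
      = (((∫ x in (0:ℝ)..1, ((3 * (u x) ^ 2 - 3) ^ 2 - μ ^ 2)) : ℝ) : ℂ)
        + (((∫ x in (0:ℝ)..1, (-2 * μ * (3 * (u x) ^ 2 - 3))) : ℝ) : ℂ) * Complex.I := by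
    rw [intervalIntegral.integral_congr (g := fun x =>
      (((3 * (u x) ^ 2 - 3) ^ 2 - μ ^ 2 : ℝ) : ℂ)
        + ((-2 * μ * (3 * (u x) ^ 2 - 3) : ℝ) : ℂ) * Complex.I)
      (fun x _ => hpt x)]
    have hfC : IntervalIntegrable (fun x => (((3 * (u x) ^ 2 - 3) ^ 2 - μ ^ 2 : ℝ) : ℂ))
        MeasureTheory.volume 0 1 := by
      apply ContinuousOn.intervalIntegrable
      apply Complex.continuous_ofReal.comp_continuousOn
      apply ContinuousOn.sub _ continuousOn_const
      apply ContinuousOn.pow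
      apply ContinuousOn.sub _ continuousOn_const
      apply ContinuousOn.mul continuousOn_const
      exact (hu.mono (by simp [Set.uIcc_of_le])).pow 2
    have hgC : IntervalIntegrable (fun x => ((-2 * μ * (3 * (u x) ^ 2 - 3) : ℝ) : ℂ))
        MeasureTheory.volume 0 1 := by
      apply ContinuousOn.intervalIntegrable
      apply Complex.continuous_ofReal.comp_continuousOn
      apply ContinuousOn.mul continuousOn_const
      apply ContinuousOn.sub _ continuousOn_const
      apply ContinuousOn.mul continuousOn_const
      exact (hu.mono (by simp [Set.uIcc_of_le])).pow 2
    rw [intervalIntegral.integral_add hfC (hgC.mul_const _),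
      intervalIntegral.integral_mul_const, intervalIntegral.integral_ofReal,
      intervalIntegral.integral_ofReal]
  have hgval : (∫ x in (0:ℝ)..1, (-2 * μ * (3 * (u x) ^ 2 - 3))) = -6 * μ * A + 6 * μ := by
    have : (fun x => -2 * μ * (3 * (u x) ^ 2 - 3))
        = fun x => (-6 * μ) * (u x) ^ 2 + 6 * μ := by funext x; ring
    rw [this, intervalIntegral.integral_add (hu2.const_mul _) intervalIntegrable_const,
      intervalIntegral.integral_const_mul, intervalIntegral.integral_const]
    simp [hA]
  have hd : (0:ℝ) < μ ^ 2 + 3 * b := by positivity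
  have him : z.im = (-6 * μ * A + 6 * μ) + 4 * μ * (δ + 2) / δ := by
    have hden : ((μ : ℂ) ^ 2 + 3 * (b : ℂ)) = ((μ ^ 2 + 3 * b : ℝ) : ℂ) := by push_cast; ring
    rw [hz, hI, hgval, hden]
    have hwim : ((-(μ : ℂ) ^ 2 + 2 * Complex.I * (μ : ℂ) - 3 * (b : ℂ)) ^ 2).im
        = 4 * μ * (-(μ ^ 2) - 3 * b) := by
      simp [pow_two, Complex.mul_im, Complex.mul_re]
      ring
    simp only [Complex.sub_im, Complex.add_im, Complex.div_ofReal_im, Complex.ofReal_im,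
      Complex.ofReal_re, Complex.mul_im, Complex.mul_re, Complex.I_im, Complex.I_re, hwim]
    field_simp
    ring
  have hA1 : A ≤ 1 := hint
  constructor
  · rw [him]; ring
  · intro h0
    have : z.im = 0 := by rw [h0]; simp
    rw [him] at this
    have h1 : 0 ≤ -6 * μ * A + 6 * μ := by nlinarith
    have h2 : 0 < 4 * μ * (δ + 2) / δ := by positivity
    linarith
end
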